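/- arXiv:1704.04468 — 9 statements merged into one kernel-verified Lean document; each statement's English description precedes it below -/
import Mathlib

section
/- Let X be a metrizable σ-compact topological space, Y a topological space, and f : X × Y → ℝ a separately continuous function. Suppose d is a metric inducing the topology of X and 𝒦 is a countable family of compact subsets of X covering X such that for some δ > 0, every open ball of radius δ in X meets only finitely many members of 𝒦. Then f is the pointwise limit of a sequence of continuous functions from X × Y to ℝ. -/
open Topology Filter Set

/-- If `X` is a metric space covered by a countable family of compact sets such that
balls of some fixed radius `δ` meet only finitely many members of the family, and
`f : X × Y → ℝ` is separately continuous, then `f` is a pointwise limit of continuous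
functions. -/
theorem stmt_0 {X Y : Type*} [MetricSpace X] [TopologicalSpace Y]
    (f : X × Y → ℝ)
    (hf₁ : ∀ y : Y, Continuous fun x : X => f (x, y))
    (hf₂ : ∀ x : X, Continuous fun y : Y => f (x, y))
    (𝒦 : Set (Set X)) (h𝒦count : 𝒦.Countable)
    (h𝒦cpt : ∀ K ∈ 𝒦, IsCompact K) (h𝒦cover : ⋃₀ 𝒦 = Set.univ)
    (δ : ℝ) (hδ : 0 < δ)
    (hfin : ∀ x : X, {K | K ∈ 𝒦 ∧ (Metric.ball x δ ∩ K).Nonempty}.Finite) :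
    ∃ F : ℕ → X × Y → ℝ, (∀ n, Continuous (F n)) ∧
      ∀ p : X × Y, Tendsto (fun n => F n p) atTop (𝓝 (f p)) := by
  classical
  -- For each `n`, choose a partition of unity subordinate to balls of radius `1/(n+1)`.
  have hex : ∀ n : ℕ, ∃ ρ : PartitionOfUnity X X univ,
      ρ.IsSubordinate fun i : X => Metric.ball i (1 / (n + 1 : ℝ)) := by
    intro n
    refine PartitionOfUnity.exists_isSubordinate isClosed_univ _
      (fun i => Metric.isOpen_ball) ?_
    intro x _
    exact mem_iUnion.2 ⟨x, Metric.mem_ball_self (by positivity)⟩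
  choose ρ hρ using hex
  set F : ℕ → X × Y → ℝ := fun n p => ∑ᶠ i : X, ρ n i p.1 * f (i, p.2) with hF
  refine ⟨F, ?_, ?_⟩
  · intro n
    apply continuous_finsum
    · intro i
      exact ((ρ n i).continuous.comp continuous_fst).mul ((hf₂ i).comp continuous_snd)
    · intro p
      obtain ⟨U, hU, hUfin⟩ := (ρ n).locallyFinite p.1
      refine ⟨U ×ˢ univ, prod_mem_nhds hU univ_mem, hUfin.subset ?_⟩
      intro i hi
      obtain ⟨q, hq1, hq2⟩ := hi
      refine ⟨q.1, ?_, hq2.1⟩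
      simp only [Function.mem_support] at hq1 ⊢
      intro h
      exact hq1 (by simp [h])
  · rintro ⟨x, y⟩
    rw [Metric.tendsto_atTop]
    intro ε hε
    -- continuity of `f (·, y)` at `x`
    have hc : ContinuousAt (fun x' : X => f (x', y)) x := (hf₁ y).continuousAt
    rw [Metric.continuousAt_iff] at hc
    obtain ⟨r, hr, hball⟩ := hc (ε / 2) (by positivity)
    obtain ⟨N, hN⟩ := exists_nat_gt (1 / r)
    refine ⟨N, fun n hn => ?_⟩
    -- reduce the finsum to a finite sum over the finite support
    have hsum1 : ∑ i ∈ (ρ n).finsupport x, ρ n i x = 1 :=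
      (ρ n).sum_finsupport (mem_univ x)
    have hsum : F n (x, y) = ∑ i ∈ (ρ n).finsupport x, ρ n i x * f (i, y) := by
      rw [hF]
      refine finsum_eq_sum_of_support_subset _ ?_
      intro i hi
      rw [(ρ n).coe_finsupport]
      simp only [Function.mem_support] at hi ⊢
      intro h
      exact hi (by simp [h])
    have key : ∀ i ∈ (ρ n).finsupport x, dist (f (i, y)) (f (x, y)) < ε / 2 := by
      intro i hi
      have hx : x ∈ Function.support ⇑(ρ n i) := (ρ n).mem_finsupport x |>.1 hi
      have hx' : x ∈ Metric.ball i (1 / (n + 1 : ℝ)) :=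
        hρ n i (subset_tsupport _ hx)
      have hdist : dist i x < r := by
        rw [Metric.mem_ball] at hx'
        have h1 : (1 : ℝ) / (n + 1) < r := by
          rw [div_lt_iff₀ (by positivity)]
          rw [div_lt_iff₀ hr] at hN
          have : (N : ℝ) ≤ n := by exact_mod_cast hn
          nlinarith
        rw [dist_comm]
        exact hx'.trans h1
      exact hball hdist
    have hFd : dist (F n (x, y)) (f (x, y)) ≤ ε / 2 := by
      rw [hsum, Real.dist_eq]
      have : ∑ i ∈ (ρ n).finsupport x, ρ n i x * f (i, y) - f (x, y)
          = ∑ i ∈ (ρ n).finsupport x, ρ n i x * (f (i, y) - f (x, y)) := by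
        simp only [mul_sub, Finset.sum_sub_distrib, ← Finset.sum_mul, hsum1, one_mul]
      rw [this]
      calc |∑ i ∈ (ρ n).finsupport x, ρ n i x * (f (i, y) - f (x, y))|
          ≤ ∑ i ∈ (ρ n).finsupport x, |ρ n i x * (f (i, y) - f (x, y))| :=
            Finset.abs_sum_le_sum_abs _ _
        _ ≤ ∑ i ∈ (ρ n).finsupport x, ρ n i x * (ε / 2) := by
            refine Finset.sum_le_sum fun i hi => ?_
            rw [abs_mul, abs_of_nonneg ((ρ n).nonneg i x)]
            exact mul_le_mul_of_nonneg_left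
              (le_of_lt (by simpa [Real.dist_eq] using key i hi)) ((ρ n).nonneg i x)
        _ = ε / 2 := by rw [← Finset.sum_mul, hsum1, one_mul]
    linarith
end

section
/- Let X be a separable metric space and ℱ a countable family of Baire class 1 functions from X × X to X. Define ℱ^[0] = {identity on X} and ℱ^[k+1] = {x ↦ f(x, g(x)) : f ∈ ℱ, g ∈ ℱ^[k]}. Then there is a comeager G_δ subset E of X such that every function in ⋃_{k≥0} ℱ^[k] is continuous at every point of E. -/
open Topology Filter Set

/-- The iterated family `ℱ^[k]`: `ℱ^[0]` contains just the identity, and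
`ℱ^[k+1] = {x ↦ f (x, g x) : f ∈ ℱ, g ∈ ℱ^[k]}`. -/
def iterFamily {X : Type*} (ℱ : Set (X × X → X)) : ℕ → Set (X → X)
  | 0 => {id}
  | (k + 1) => {h | ∃ f ∈ ℱ, ∃ g ∈ iterFamily ℱ k, h = fun x => f (x, g x)}

/-- Key single-step lemma: if `f : X × X → X` is Baire class 1 and `g` is continuous
on `S`, then there is a comeager Gδ set `T` such that `x ↦ f (x, g x)` is continuous
on `S ∩ T`. -/
lemma key_step {X : Type*} [MetricSpace X] [TopologicalSpace.SeparableSpace X]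
    (f : X × X → X) (hf : ∀ U : Set X, IsOpen U → IsGδ ((f ⁻¹' U)ᶜ))
    (g : X → X) (S : Set X) (hg : ContinuousOn g S) :
    ∃ T : Set X, IsGδ T ∧ T ∈ residual X ∧
      ContinuousOn (fun x => f (x, g x)) (S ∩ T) := by
  obtain ⟨D, Dcount, Ddense⟩ := TopologicalSpace.exists_countable_dense X
  -- for each radius index `j` and center `d`, the preimage of the ball is a countable
  -- union of closed sets
  have hFσ : ∀ (j : ℕ) (d : X), ∃ 𝒞 : Set (Set (X × X)), 𝒞.Countable ∧
      (∀ F ∈ 𝒞, IsClosed F) ∧ f ⁻¹' (Metric.ball d (1 / (j + 1))) = ⋃₀ 𝒞 := by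
    intro j d
    obtain ⟨T, Topen, Tcount, hT⟩ := hf (Metric.ball d (1 / (j + 1))) Metric.isOpen_ball
    refine ⟨compl '' T, Tcount.image _, ?_, ?_⟩
    · rintro F ⟨t, ht, rfl⟩
      exact (Topen t ht).isClosed_compl
    · have : f ⁻¹' Metric.ball d (1 / (↑j + 1)) = ((f ⁻¹' Metric.ball d (1 / (↑j + 1)))ᶜ)ᶜ := by
        simp
      rw [this, hT, Set.compl_sInter]
  choose 𝒞 h𝒞count h𝒞closed h𝒞union using hFσ
  set Φ : X → X × X := fun x => (x, g x) with hΦ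
  -- the countable family of all "bad" closed sets
  set ℬ : Set (Set (X × X)) := ⋃ j : ℕ, ⋃ d ∈ D, 𝒞 j d with hℬ
  have ℬcount : ℬ.Countable :=
    countable_iUnion fun j => Dcount.biUnion fun d _ => h𝒞count j d
  set T : Set X := ⋂ F ∈ ℬ, (frontier (closure (Φ ⁻¹' F ∩ S)))ᶜ with hTdef
  have hopen : ∀ F ∈ ℬ, IsOpen (frontier (closure (Φ ⁻¹' F ∩ S)))ᶜ := fun F _ =>
    isClosed_frontier.isOpen_compl
  have hdense : ∀ F ∈ ℬ, Dense (frontier (closure (Φ ⁻¹' F ∩ S)))ᶜ := by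
    intro F _
    rw [← interior_eq_empty_iff_dense_compl]
    exact interior_frontier isClosed_closure
  refine ⟨T, ?_, ?_, ?_⟩
  · exact IsGδ.biInter ℬcount fun F hF => (hopen F hF).isGδ
  · exact (countable_bInter_mem ℬcount).2 fun F hF =>
      residual_of_dense_open (hopen F hF) (hdense F hF)
  · intro x hx
    rw [Metric.continuousWithinAt_iff]
    intro ε hε
    obtain ⟨j, hj⟩ := exists_nat_one_div_lt (half_pos hε)
    have hj' : (0 : ℝ) < 1 / (j + 1) := by positivity
    obtain ⟨d, hd, hdist⟩ := Ddense.exists_dist_lt (f (Φ x)) hj'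
    have hxball : Φ x ∈ f ⁻¹' (Metric.ball d (1 / (j + 1))) := by
      simpa [Metric.mem_ball, dist_comm] using hdist
    rw [h𝒞union j d] at hxball
    obtain ⟨F, hF𝒞, hxF⟩ := hxball
    have hFℬ : F ∈ ℬ := by
      rw [hℬ]
      exact mem_iUnion.2 ⟨j, mem_iUnion₂.2 ⟨d, hd, hF𝒞⟩⟩
    have hFclosed : IsClosed F := h𝒞closed j d F hF𝒞
    set C : Set X := closure (Φ ⁻¹' F ∩ S) with hC
    have hxC : x ∈ C := subset_closure ⟨hxF, hx.1⟩
    have hxnf : x ∉ frontier C := by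
      have := hx.2
      rw [hTdef] at this
      exact (mem_iInter₂.1 this F hFℬ :)
    have hxint : x ∈ interior C := by
      rcases (isClosed_closure (s := Φ ⁻¹' F ∩ S)).frontier_eq ▸ hxnf with h
      by_contra hni
      exact h ⟨hxC, hni⟩
    obtain ⟨δ, hδ, hball⟩ := Metric.isOpen_iff.1 isOpen_interior x hxint
    refine ⟨δ, hδ, fun y hy hyd => ?_⟩
    have hyC : y ∈ C := interior_subset (hball hyd)
    -- `Φ y ∈ F` because `y` is in the closure of `Φ ⁻¹' F ∩ S` and `Φ` is continuous
    -- within `S` at `y`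
    have hΦy : Φ y ∈ F := by
      have hcw : ContinuousWithinAt Φ (Φ ⁻¹' F ∩ S) y :=
        (continuousWithinAt_id.prodMk ((hg y hy.1).mono inter_subset_right))
      have := hcw.mem_closure_image hyC
      have himg : Φ '' (Φ ⁻¹' F ∩ S) ⊆ F :=
        (image_mono inter_subset_left).trans (image_preimage_subset _ _)
      exact hFclosed.closure_eq ▸ (closure_mono himg) this
    have hyball : f (Φ y) ∈ Metric.ball d (1 / (j + 1)) := by
      have : Φ y ∈ f ⁻¹' (Metric.ball d (1 / (j + 1))) := by
        rw [h𝒞union j d]; exact ⟨F, hF𝒞, hΦy⟩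
      exact this
    have h1 : dist (f (Φ y)) d < 1 / (j + 1) := Metric.mem_ball.1 hyball
    have h2 : dist (f (Φ x)) d < 1 / (j + 1) := hdist
    calc dist (f (Φ y)) (f (Φ x)) ≤ dist (f (Φ y)) d + dist (f (Φ x)) d :=
          dist_triangle_right _ _ _
      _ < 1 / (j + 1) + 1 / (j + 1) := add_lt_add h1 h2
      _ < ε / 2 + ε / 2 := add_lt_add hj hj
      _ = ε := add_halves ε

lemma iterFamily_countable {X : Type*} {ℱ : Set (X × X → X)} (hcount : ℱ.Countable) :
    ∀ k, (iterFamily ℱ k).Countable := by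
  intro k
  induction k with
  | zero => exact countable_singleton _
  | succ k ih =>
    have : iterFamily ℱ (k + 1) =
        Set.image2 (fun (f : X × X → X) (g : X → X) => fun x => f (x, g x)) ℱ
          (iterFamily ℱ k) := by
      ext h
      simp only [iterFamily, mem_setOf_eq, Set.mem_image2]
      constructor
      · rintro ⟨f, hf, g, hg, rfl⟩; exact ⟨f, hf, g, hg, rfl⟩
      · rintro ⟨f, hf, g, hg, rfl⟩; exact ⟨f, hf, g, hg, rfl⟩
    rw [this]
    exact Set.Countable.image2 hcount ih _

/-- Inductive step: from a good set for level `k` produce a good set for level `k + 1`. -/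
lemma step_lemma {X : Type*} [MetricSpace X] [TopologicalSpace.SeparableSpace X]
    (ℱ : Set (X × X → X)) (hcount : ℱ.Countable)
    (hBaire1 : ∀ f ∈ ℱ, ∀ U : Set X, IsOpen U → IsGδ ((f ⁻¹' U)ᶜ))
    (k : ℕ) (S : Set X) (hSgδ : IsGδ S) (hSres : S ∈ residual X)
    (hS : ∀ g ∈ iterFamily ℱ k, ContinuousOn g S) :
    ∃ S' : Set X, S' ⊆ S ∧ IsGδ S' ∧ S' ∈ residual X ∧
      ∀ h ∈ iterFamily ℱ (k + 1), ContinuousOn h S' := by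
  set P : Set ((X × X → X) × (X → X)) := ℱ ×ˢ iterFamily ℱ k with hP
  have Pcount : P.Countable := hcount.prod (iterFamily_countable hcount k)
  have hex : ∀ p : (X × X → X) × (X → X), ∃ T : Set X, IsGδ T ∧ T ∈ residual X ∧
      (p ∈ P → ContinuousOn (fun x => p.1 (x, p.2 x)) (S ∩ T)) := by
    intro p
    by_cases hp : p ∈ P
    · obtain ⟨T, hT1, hT2, hT3⟩ :=
        key_step p.1 (hBaire1 p.1 hp.1) p.2 S (hS p.2 hp.2)
      exact ⟨T, hT1, hT2, fun _ => hT3⟩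
    · exact ⟨univ, IsGδ.univ, univ_mem, fun h => absurd h hp⟩
  choose T hT1 hT2 hT3 using hex
  refine ⟨S ∩ ⋂ p ∈ P, T p, inter_subset_left, ?_, ?_, ?_⟩
  · exact hSgδ.inter (IsGδ.biInter Pcount fun p _ => hT1 p)
  · exact inter_mem hSres ((countable_bInter_mem Pcount).2 fun p _ => hT2 p)
  · rintro h ⟨f, hf, g, hg, rfl⟩
    have hp : (f, g) ∈ P := ⟨hf, hg⟩
    exact (hT3 (f, g) hp).mono
      (inter_subset_inter_right S (biInter_subset_of_mem hp))

/-- If `X` is a separable metric space and `ℱ` is a countable family of Baire class 1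
functions from `X × X` to `X` (preimages of open sets are `F_σ`), then there is a
comeager `G_δ` set `E ⊆ X` on which every member of `⋃ₖ ℱ^[k]` is continuous. -/
theorem stmt_1 {X : Type*} [MetricSpace X] [TopologicalSpace.SeparableSpace X]
    (ℱ : Set (X × X → X)) (hcount : ℱ.Countable)
    (hBaire1 : ∀ f ∈ ℱ, ∀ U : Set X, IsOpen U → IsGδ ((f ⁻¹' U)ᶜ)) :
    ∃ E : Set X, IsGδ E ∧ E ∈ residual X ∧
      ∀ k : ℕ, ∀ g ∈ iterFamily ℱ k, ContinuousOn g E := by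
  have key : ∀ k : ℕ, ∃ S : Set X, IsGδ S ∧ S ∈ residual X ∧
      ∀ j ≤ k, ∀ g ∈ iterFamily ℱ j, ContinuousOn g S := by
    intro k
    induction k with
    | zero =>
      refine ⟨univ, IsGδ.univ, univ_mem, ?_⟩
      intro j hj g hg
      interval_cases j
      simp only [iterFamily, mem_singleton_iff] at hg
      subst hg
      exact continuous_id.continuousOn
    | succ k ih =>
      obtain ⟨S, hSgδ, hSres, hS⟩ := ih
      obtain ⟨S', hsub, hS'gδ, hS'res, hS'⟩ :=
        step_lemma ℱ hcount hBaire1 k S hSgδ hSres (hS k le_rfl)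
      refine ⟨S', hS'gδ, hS'res, ?_⟩
      intro j hj g hg
      rcases Nat.lt_succ_iff_lt_or_eq.1 (Nat.lt_succ_of_le hj) with h | rfl
      · exact (hS j (Nat.lt_succ_iff.1 h) g hg).mono hsub
      · exact hS' g hg
  choose S hSgδ hSres hS using key
  refine ⟨⋂ k, S k, IsGδ.iInter hSgδ, countable_iInter_mem.2 hSres, ?_⟩
  intro k g hg
  exact (hS k k le_rfl g hg).mono (iInter_subset _ k)
end

section
/- Let X and Y be normed spaces and f : X → Y a solvent map satisfying ‖f(x) − f(y)‖ = ‖f(x − y)‖ for all x, y ∈ X. Then for every norm-bounded subset B ⊆ X, there exists a constant c > 0 such that ‖f(x) − f(y)‖ ≥ c·‖x − y‖ for all x, y ∈ B; in particular, the restriction of f to B is injective with Lipschitz inverse. -/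
open Topology Filter Set

private lemma stmt_5_aux {X Y : Type*} [NormedAddCommGroup X]
    [NormedAddCommGroup Y] (f : X → Y)
    (hinv : ∀ x y : X, ‖f x - f y‖ = ‖f (x - y)‖) (z : X) :
    ∀ m : ℕ, ‖f (m • z) - f 0‖ ≤ m * ‖f z‖ := by
  intro m
  induction m with
  | zero => simp
  | succ m ih =>
    have h2 : (m + 1) • z - m • z = z := by rw [succ_nsmul]; abel
    have h1 : ‖f ((m + 1) • z) - f (m • z)‖ = ‖f z‖ := by rw [hinv, h2]
    have h3 := norm_sub_le_norm_sub_add_norm_sub (f ((m + 1) • z)) (f (m • z)) (f 0)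
    rw [h1] at h3
    push_cast
    linarith

/-- If `f : X → Y` is solvent and satisfies `‖f x - f y‖ = ‖f (x - y)‖`, then on every
norm-bounded set `B` the map `f` expands distances by a positive constant; in
particular `f` is injective on `B` (with Lipschitz inverse). -/
theorem stmt_5 {X Y : Type*} [NormedAddCommGroup X] [NormedSpace ℝ X]
    [NormedAddCommGroup Y] [NormedSpace ℝ Y] (f : X → Y)
    (hsolvent : ∀ n : ℕ, ∃ R : ℝ, 0 < R ∧
      ∀ x y : X, ‖x - y‖ ∈ Set.Icc R (R + n) → (n : ℝ) < ‖f x - f y‖)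
    (hinv : ∀ x y : X, ‖f x - f y‖ = ‖f (x - y)‖)
    (B : Set X) (hB : ∃ M : ℝ, ∀ x ∈ B, ‖x‖ ≤ M) :
    ∃ c : ℝ, 0 < c ∧ (∀ x ∈ B, ∀ y ∈ B, c * ‖x - y‖ ≤ ‖f x - f y‖) ∧
      Set.InjOn f B := by
  obtain ⟨M, hM⟩ := hB
  set M' : ℝ := max M 0 with hM'def
  have hM'0 : (0:ℝ) ≤ M' := le_max_right _ _
  set n : ℕ := ⌈2 * M'⌉₊ + 1 with hndef
  have hn1 : (1:ℝ) ≤ n := by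
    have : 1 ≤ n := Nat.succ_le_succ (Nat.zero_le _)
    exact_mod_cast this
  have hn2M : 2 * M' ≤ n := by
    calc 2 * M' ≤ (⌈2 * M'⌉₊ : ℝ) := Nat.le_ceil _
      _ ≤ n := by exact_mod_cast Nat.le_succ _
  obtain ⟨R, hR, hsol⟩ := hsolvent n
  have hden : 0 < R + 2 * M' := by linarith
  have key : ∀ x ∈ B, ∀ y ∈ B, (n : ℝ) / (R + 2 * M') * ‖x - y‖ ≤ ‖f x - f y‖ := by
    intro x hx y hy
    rcases eq_or_ne x y with rfl | hxy
    · simp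
    set z := x - y with hzdef
    have hz0 : 0 < ‖z‖ := by
      simpa [hzdef] using norm_pos_iff.mpr (sub_ne_zero.mpr hxy)
    have hz2M : ‖z‖ ≤ 2 * M' := by
      have h1 : ‖x‖ ≤ M' := (hM x hx).trans (le_max_left _ _)
      have h2 : ‖y‖ ≤ M' := (hM y hy).trans (le_max_left _ _)
      calc ‖z‖ ≤ ‖x‖ + ‖y‖ := norm_sub_le _ _
        _ ≤ 2 * M' := by linarith
    set k : ℕ := ⌈R / ‖z‖⌉₊ with hkdef
    have hk1 : R ≤ (k : ℝ) * ‖z‖ := by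
      have := Nat.le_ceil (R / ‖z‖)
      calc R = R / ‖z‖ * ‖z‖ := by field_simp
        _ ≤ (k : ℝ) * ‖z‖ := by
          apply mul_le_mul_of_nonneg_right this hz0.le
    have hk2 : (k : ℝ) * ‖z‖ ≤ R + ‖z‖ := by
      have hlt : (k : ℝ) < R / ‖z‖ + 1 :=
        Nat.ceil_lt_add_one (by positivity)
      have : (k : ℝ) * ‖z‖ ≤ (R / ‖z‖ + 1) * ‖z‖ :=
        mul_le_mul_of_nonneg_right hlt.le hz0.le
      calc (k : ℝ) * ‖z‖ ≤ (R / ‖z‖ + 1) * ‖z‖ := this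
        _ = R + ‖z‖ := by field_simp
    have hnorm : ‖(k • z : X) - 0‖ = (k : ℝ) * ‖z‖ := by
      rw [sub_zero, ← Nat.cast_smul_eq_nsmul ℝ, norm_smul, Real.norm_natCast]
    have hmem : ‖(k • z : X) - 0‖ ∈ Set.Icc R (R + (n:ℝ)) := by
      rw [hnorm]
      constructor
      · exact hk1
      · linarith
    have hbig : (n : ℝ) < ‖f (k • z) - f 0‖ := hsol _ _ hmem
    have htel : ‖f (k • z) - f 0‖ ≤ (k : ℝ) * ‖f z‖ := stmt_5_aux f hinv z k
    have hfz : ‖f x - f y‖ = ‖f z‖ := hinv x y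
    rw [hfz]
    have hfz0 : 0 ≤ ‖f z‖ := norm_nonneg _
    rw [div_mul_eq_mul_div, div_le_iff₀ hden]
    have hk2' : (k : ℝ) * ‖z‖ ≤ R + 2 * M' := by linarith
    nlinarith [mul_le_mul_of_nonneg_left hk2' hfz0, hbig.le.trans htel]
  refine ⟨(n : ℝ) / (R + 2 * M'), by positivity, key, ?_⟩
  intro x hx y hy hfeq
  have := key x hx y hy
  rw [hfeq, sub_self, norm_zero] at this
  have hc : 0 < (n : ℝ) / (R + 2 * M') := by positivity
  have : ‖x - y‖ ≤ 0 := by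
    by_contra h
    push_neg at h
    nlinarith
  have : x - y = 0 := by
    rwa [← norm_le_zero_iff]
  exact sub_eq_zero.mp this
end

section
/- Let (M, d) be a separable metric space with d bounded, and let 𝒯 be the closure in ℝ^M (product topology) of the set {x̄ : x ∈ M}, where x̄(y) = d(x, y) for all y ∈ M. Then 𝒯 is a compact metrizable space and the map x ↦ x̄ is a homeomorphism of M onto a dense subset of 𝒯. -/
open Topology Filter Set

/-- If `(M, d)` is a separable metric space with bounded metric, and `𝒯` is the closure
in `ℝ^M` (pointwise topology) of the realized "types" `x̄ = d(x, ·)`, then `𝒯` is a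
compact metrizable space and `x ↦ x̄` is a homeomorphism of `M` onto a dense subset of
`𝒯`. -/
theorem stmt_6 {M : Type*} [MetricSpace M] [TopologicalSpace.SeparableSpace M]
    (hbdd : ∃ C : ℝ, ∀ x y : M, dist x y ≤ C)
    (e : M → (M → ℝ)) (he : ∀ x y : M, e x y = dist x y)
    (𝒯 : Set (M → ℝ)) (h𝒯 : 𝒯 = closure (Set.range e)) :
    IsCompact 𝒯 ∧ TopologicalSpace.MetrizableSpace 𝒯 ∧ Topology.IsEmbedding e ∧
      Dense (Set.range (fun x : M =>
        (⟨e x, h𝒯 ▸ subset_closure ⟨x, rfl⟩⟩ : 𝒯))) := by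
  obtain ⟨C, hC⟩ := hbdd
  set C' : ℝ := max C 0 with hC'
  -- range e sits in a compact box
  have hrange : Set.range e ⊆ Set.univ.pi (fun _ : M => Set.Icc (0:ℝ) C') := by
    rintro _ ⟨x, rfl⟩ y -
    rw [he]
    exact ⟨dist_nonneg, le_trans (hC x y) (le_max_left _ _)⟩
  have hboxK : IsCompact (Set.univ.pi (fun _ : M => Set.Icc (0:ℝ) C')) :=
    isCompact_univ_pi (fun _ => isCompact_Icc)
  have h𝒯sub : 𝒯 ⊆ Set.univ.pi (fun _ : M => Set.Icc (0:ℝ) C') := by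
    rw [h𝒯]; exact closure_minimal hrange (hboxK.isClosed)
  have hcomp : IsCompact 𝒯 :=
    hboxK.of_isClosed_subset (h𝒯 ▸ isClosed_closure) h𝒯sub
  -- elements of 𝒯 are 1-Lipschitz
  have hLip : ∀ f ∈ 𝒯, ∀ y y' : M, dist (f y) (f y') ≤ dist y y' := by
    have hcl : IsClosed {f : M → ℝ | ∀ y y' : M, dist (f y) (f y') ≤ dist y y'} := by
      have : {f : M → ℝ | ∀ y y' : M, dist (f y) (f y') ≤ dist y y'} =
          ⋂ (y : M) (y' : M), {f : M → ℝ | dist (f y) (f y') ≤ dist y y'} := by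
        ext f; simp [Set.mem_iInter]
      rw [this]
      exact isClosed_iInter fun y => isClosed_iInter fun y' =>
        isClosed_le (by fun_prop) continuous_const
    intro f hf
    have : f ∈ closure {f : M → ℝ | ∀ y y' : M, dist (f y) (f y') ≤ dist y y'} := by
      refine closure_mono ?_ (h𝒯 ▸ hf)
      rintro _ ⟨x, rfl⟩ y y'
      rw [he, he, Real.dist_eq, dist_comm x y, dist_comm x y']
      exact abs_dist_sub_le y y' x
    exact hcl.closure_subset this
  have hcont𝒯 : ∀ f ∈ 𝒯, Continuous f := fun f hf =>
    (LipschitzWith.of_dist_le_mul (K := 1) (fun y y' => by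
      simpa using hLip f hf y y')).continuous
  -- metrizability
  have hmetr : TopologicalSpace.MetrizableSpace 𝒯 := by
    obtain ⟨S, hScount, hSdense⟩ := TopologicalSpace.exists_countable_dense M
    haveI : Countable S := hScount.to_subtype
    haveI : CompactSpace 𝒯 := isCompact_iff_compactSpace.mp hcomp
    set r : 𝒯 → (S → ℝ) := fun f s => f.1 s with hr
    have hrc : Continuous r := by
      apply continuous_pi
      intro s
      exact (continuous_apply (s : M)).comp continuous_subtype_val
    have hinj : Function.Injective r := by
      rintro ⟨f, hf⟩ ⟨g, hg⟩ hfg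
      have : f = g :=
        (hcont𝒯 f hf).ext_on hSdense (hcont𝒯 g hg)
          (fun x hx => congrFun hfg ⟨x, hx⟩)
      simpa using this
    exact (hrc.isClosedEmbedding hinj).isEmbedding.metrizableSpace
  -- embedding
  have hembed : Topology.IsEmbedding e := by
    have hinj : Function.Injective e := by
      intro x y hxy
      have := congrFun hxy y
      rw [he, he, dist_self] at this
      exact dist_le_zero.mp (le_of_eq this)
    have hcont : Continuous e := continuous_pi (fun y => by
      simp only [he]; exact Continuous.dist continuous_id continuous_const)
    refine ⟨Topology.isInducing_iff_nhds.mpr fun x => le_antisymm hcont.continuousAt.le_comap ?_, hinj⟩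
    intro U hU
    obtain ⟨ε, hε, hball⟩ := Metric.mem_nhds_iff.mp hU
    refine ⟨{f : M → ℝ | f x < ε}, ?_, ?_⟩
    · have hopen : IsOpen {f : M → ℝ | f x < ε} :=
        isOpen_lt (continuous_apply x) continuous_const
      refine hopen.mem_nhds ?_
      simp [he, hε]
    · intro x' hx'
      apply hball
      simp only [Set.mem_preimage, Set.mem_setOf_eq, he] at hx'
      simpa [Metric.mem_ball] using hx'
  refine ⟨hcomp, hmetr, hembed, ?_⟩
  -- density
  rw [dense_iff_closure_eq, Set.eq_univ_iff_forall]
  rintro ⟨f, hf⟩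
  rw [Topology.IsInducing.subtypeVal.closure_eq_preimage_closure_image]
  have himg : Subtype.val '' (Set.range (fun x : M =>
      (⟨e x, h𝒯 ▸ subset_closure ⟨x, rfl⟩⟩ : 𝒯))) = Set.range e := by
    ext g
    constructor
    · rintro ⟨⟨g, hg⟩, ⟨x, hx⟩, rfl⟩
      exact ⟨x, congrArg Subtype.val hx⟩
    · rintro ⟨x, rfl⟩
      exact ⟨⟨e x, h𝒯 ▸ subset_closure ⟨x, rfl⟩⟩, ⟨x, rfl⟩, rfl⟩
  rw [himg]
  exact h𝒯 ▸ hf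
end

section
/- Let X be a Banach space with a translation-invariant pseudometric d coarsely equivalent to the norm metric (i.e., the identity map Id : (X, ‖·‖) → (X, d) is a coarse equivalence), let Δ be a countable dense ℚ-subspace of X, and let 𝒯 ⊆ ℝ^{ℚ×Δ} be the closure of {x̄ : x ∈ Δ} where x̄(λ, y) = d(λx, y). Then for every M ≥ 0 the set 𝒯_M = {σ ∈ 𝒯 : σ(1, 0) ≤ M} is compact. -/
open Topology Filter Set

/-- If `d` is a translation-invariant pseudometric on a Banach space `X` coarsely
equivalent to the norm metric, `Δ` is a countable dense `ℚ`-subspace of `X`, and `𝒯`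
is the closure in `ℝ^{ℚ×Δ}` of the realized types `x̄(λ, y) = d(λ x, y)` for `x ∈ Δ`,
then for every `M ≥ 0` the set `𝒯_M = {σ ∈ 𝒯 : σ(1, 0) ≤ M}` is compact. -/
theorem stmt_8 {X : Type*} [NormedAddCommGroup X] [NormedSpace ℝ X] [CompleteSpace X]
    (d : X → X → ℝ)
    (hsymm : ∀ x y : X, d x y = d y x)
    (htri : ∀ x y z : X, d x z ≤ d x y + d y z)
    (hnonneg : ∀ x y : X, 0 ≤ d x y)
    (hinv : ∀ x y z : X, d (x + z) (y + z) = d x y)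
    (hcoarse : ∀ t : ℝ, ∃ C : ℝ, ∀ x y : X, ‖x - y‖ ≤ t → d x y ≤ C)
    (hexpand : ∀ m : ℝ, ∃ R : ℝ, ∀ x y : X, R ≤ ‖x - y‖ → m ≤ d x y)
    (Δ : Set X) (hΔcount : Δ.Countable) (hΔdense : Dense Δ)
    (hΔ0 : (0 : X) ∈ Δ) (hΔadd : ∀ x ∈ Δ, ∀ y ∈ Δ, x + y ∈ Δ)
    (hΔsmul : ∀ (q : ℚ), ∀ x ∈ Δ, (q : ℝ) • x ∈ Δ)
    (bar : X → (ℚ × Δ → ℝ)) (hbar : ∀ (x : X) (p : ℚ × Δ), bar x p = d ((p.1 : ℝ) • x) p.2)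
    (𝒯 : Set (ℚ × Δ → ℝ)) (h𝒯 : 𝒯 = closure (bar '' Δ)) :
    ∀ M : ℝ, 0 ≤ M → IsCompact {σ ∈ 𝒯 | σ (1, ⟨0, hΔ0⟩) ≤ M} := by

  intro M hM
  obtain ⟨R, hR⟩ := hexpand (M + 2)
  have hclosed : IsClosed {σ ∈ 𝒯 | σ (1, ⟨0, hΔ0⟩) ≤ M} := by
    apply IsClosed.inter
    · rw [h𝒯]; exact isClosed_closure
    · exact isClosed_le (continuous_apply _) continuous_const
  set B : ℚ × Δ → ℝ := fun p => (hcoarse (|(p.1 : ℝ)| * R)).choose + d 0 p.2 + 1 with hB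
  have hsub : {σ ∈ 𝒯 | σ (1, ⟨0, hΔ0⟩) ≤ M} ⊆ Set.pi Set.univ (fun p => Set.Icc 0 (B p)) := by
    rintro σ ⟨hσT, hσM⟩ p _
    have hσcl : σ ∈ closure (bar '' Δ) := h𝒯 ▸ hσT
    constructor
    · -- lower bound
      have hcl : IsClosed {τ : ℚ × Δ → ℝ | 0 ≤ τ p} :=
        isClosed_le continuous_const (continuous_apply p)
      have hsub2 : bar '' Δ ⊆ {τ : ℚ × Δ → ℝ | 0 ≤ τ p} := by
        rintro τ ⟨x, hx, rfl⟩
        simp only [Set.mem_setOf_eq, hbar]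
        exact hnonneg _ _
      exact closure_minimal hsub2 hcl hσcl
    · -- upper bound
      have hU : ((fun τ : ℚ × Δ → ℝ => τ (1, ⟨0, hΔ0⟩)) ⁻¹' Metric.ball (σ (1, ⟨0, hΔ0⟩)) 1 ∩
            (fun τ : ℚ × Δ → ℝ => τ p) ⁻¹' Metric.ball (σ p) 1) ∈ 𝓝 σ := by
        refine Filter.inter_mem ?_ ?_
        · exact (continuous_apply _).continuousAt.preimage_mem_nhds
            (Metric.ball_mem_nhds _ one_pos)
        · exact (continuous_apply p).continuousAt.preimage_mem_nhds
            (Metric.ball_mem_nhds _ one_pos)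
      obtain ⟨τ, ⟨h1, h2⟩, ⟨x, hxΔ, rfl⟩⟩ := mem_closure_iff_nhds.mp hσcl _ hU
      rw [Set.mem_preimage, Metric.mem_ball, Real.dist_eq, hbar] at h1 h2
      simp only [Rat.cast_one, one_smul] at h1
      have hd0 : d x (0 : X) < M + 2 := by
        have := abs_lt.mp h1
        linarith
      have hxR : ‖x‖ ≤ R := by
        by_contra h
        push_neg at h
        have := hR x 0 (by simpa using h.le)
        linarith
      have hC := (hcoarse (|(p.1 : ℝ)| * R)).choose_spec
      have hd1 : d ((p.1 : ℝ) • x) 0 ≤ (hcoarse (|(p.1 : ℝ)| * R)).choose := by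
        apply hC
        rw [sub_zero, norm_smul, Real.norm_eq_abs]
        exact mul_le_mul_of_nonneg_left hxR (abs_nonneg _)
      have hd2 : d ((p.1 : ℝ) • x) p.2 ≤ (hcoarse (|(p.1 : ℝ)| * R)).choose + d 0 p.2 :=
        le_trans (htri _ 0 _) (by linarith)
      have := abs_lt.mp h2
      simp only [hB]
      linarith
  exact IsCompact.of_isClosed_subset
    (isCompact_univ_pi fun p => isCompact_Icc) hclosed hsub
end

section
/- Let 𝒯 be a metrizable topological space which is a countable union of compact sets 𝒯_0 ⊆ 𝒯_1 ⊆ ⋯ such that for some compatible metric D and some δ > 0, every D-ball of radius δ meets only finitely many of the 'annuli' 𝒯_{M+1} \ int(𝒯_M). If Φ : 𝒯 × 𝒯 → ℝ is separately continuous, then Φ is a Baire class 1 function. -/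
open Topology Filter Set

/-- Let `𝒯` be a metric space which is an increasing countable union of compact sets
`T 0 ⊆ T 1 ⊆ ⋯` such that for some `δ > 0` every ball of radius `δ` meets only finitely
many of the annuli `T (M+1) \ interior (T M)`.  Then every separately continuous
`Φ : 𝒯 × 𝒯 → ℝ` is Baire class 1, i.e. a pointwise limit of continuous functions. -/
theorem stmt_10 {𝒯 : Type*} [MetricSpace 𝒯]
    (T : ℕ → Set 𝒯) (hcpt : ∀ M, IsCompact (T M)) (hmono : Monotone T)
    (hcover : ⋃ M, T M = Set.univ)
    (δ : ℝ) (hδ : 0 < δ)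
    (hfin : ∀ x : 𝒯,
      {M : ℕ | (Metric.ball x δ ∩ (T (M + 1) \ interior (T M))).Nonempty}.Finite)
    (Φ : 𝒯 × 𝒯 → ℝ)
    (hΦ₁ : ∀ τ : 𝒯, Continuous fun σ => Φ (σ, τ))
    (hΦ₂ : ∀ σ : 𝒯, Continuous fun τ => Φ (σ, τ)) :
    ∃ F : ℕ → 𝒯 × 𝒯 → ℝ, (∀ n, Continuous (F n)) ∧
      ∀ p : 𝒯 × 𝒯, Tendsto (fun n => F n p) atTop (𝓝 (Φ p)) := by
  -- For each `n`, choose a partition of unity subordinate to the cover by balls of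
  -- radius `1/(n+1)`.
  have key : ∀ n : ℕ, ∃ f : PartitionOfUnity 𝒯 𝒯 univ,
      f.IsSubordinate (fun x => Metric.ball x (1 / (n + 1))) := by
    intro n
    refine PartitionOfUnity.exists_isSubordinate isClosed_univ _
      (fun x => Metric.isOpen_ball) (fun x _ => Set.mem_iUnion.2 ⟨x, ?_⟩)
    exact Metric.mem_ball_self (by positivity)
  choose f hfsub using key
  refine ⟨fun n p => ∑ᶠ i, f n i p.1 * Φ (i, p.2), fun n => ?_, fun p => ?_⟩
  · -- continuity of each `F n`
    refine continuous_finsum (fun i => ?_) ?_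
    · exact ((f n i).continuous.comp continuous_fst).mul ((hΦ₂ i).comp continuous_snd)
    · refine ((f n).locallyFinite.preimage_continuous continuous_fst).subset fun i => ?_
      intro p hp
      simp only [Function.mem_support, Set.mem_preimage] at hp ⊢
      intro h
      exact hp (by simp [h])
  · -- pointwise convergence
    obtain ⟨σ, τ⟩ := p
    rw [Metric.tendsto_atTop]
    intro ε hε
    -- continuity of `Φ (·, τ)` at `σ`
    have hc := (hΦ₁ τ).continuousAt (x := σ)
    rw [Metric.continuousAt_iff] at hc
    obtain ⟨r, hr, hrc⟩ := hc (ε / 2) (by positivity)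
    obtain ⟨N, hN⟩ := exists_nat_one_div_lt hr
    refine ⟨N, fun n hn => ?_⟩
    have hptfin : {i : 𝒯 | (f n) i σ ≠ 0}.Finite := by
      have := (f n).locallyFinite.point_finite σ
      simpa [Function.support] using this
    set t : Finset 𝒯 := hptfin.toFinset with ht
    have hsubt : (Function.support fun i => (f n) i σ) ⊆ (t : Set 𝒯) := by
      intro i hi; simpa [ht] using hi
    have hsum1 : ∑ i ∈ t, (f n) i σ = 1 := by
      rw [← finsum_eq_sum_of_support_subset _ hsubt]
      exact (f n).sum_eq_one (Set.mem_univ σ)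
    have hFval : ∑ᶠ i, f n i σ * Φ (i, τ) = ∑ i ∈ t, f n i σ * Φ (i, τ) := by
      refine finsum_eq_sum_of_support_subset _ ?_
      intro i hi
      refine hsubt ?_
      simp only [Function.mem_support] at hi ⊢
      intro h; exact hi (by simp [h])
    have hΦval : Φ (σ, τ) = ∑ i ∈ t, f n i σ * Φ (σ, τ) := by
      rw [← Finset.sum_mul, hsum1, one_mul]
    have hkey : ∀ i ∈ t, |f n i σ * Φ (i, τ) - f n i σ * Φ (σ, τ)| ≤ f n i σ * (ε / 2) := by
      intro i _
      rw [← mul_sub, abs_mul, abs_of_nonneg ((f n).nonneg i σ)]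
      rcases eq_or_ne ((f n) i σ) 0 with h0 | h0
      · simp [h0]
      · refine mul_le_mul_of_nonneg_left ?_ ((f n).nonneg i σ)
        have hmem : σ ∈ Metric.ball i (1 / (n + 1)) :=
          hfsub n i (subset_tsupport _ (by simpa [Function.mem_support] using h0))
        have hdist : dist i σ < r := by
          rw [dist_comm]
          refine lt_of_lt_of_le (lt_of_lt_of_le (Metric.mem_ball.1 hmem) ?_) hN.le
          gcongr
        exact (hrc hdist).le
    have hdist : dist (∑ᶠ i, f n i σ * Φ (i, τ)) (Φ (σ, τ)) ≤ ε / 2 := by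
      rw [Real.dist_eq, hFval, hΦval, ← Finset.sum_sub_distrib]
      calc |∑ i ∈ t, (f n i σ * Φ (i, τ) - f n i σ * Φ (σ, τ))|
          ≤ ∑ i ∈ t, |f n i σ * Φ (i, τ) - f n i σ * Φ (σ, τ)| :=
            Finset.abs_sum_le_sum_abs _ _
        _ ≤ ∑ i ∈ t, f n i σ * (ε / 2) := Finset.sum_le_sum hkey
        _ = ε / 2 := by rw [← Finset.sum_mul, hsum1, one_mul]
    exact lt_of_le_of_lt hdist (by linarith)
end

section
/- Let (ξ_n) be a 1-unconditional, 1-spreading normalized-up-to-constants basic sequence, ᾱ ∈ ℚ^{<ℕ} with length at least 2, T_ᾱ the associated operator on the closed span H̄, and suppose β ≥ 0 and (u_n) ⊆ span(ξ_n) admit a spreading (u_n′) of (u_n) with ⦀T_ᾱ(u_n) − β u_n′⦀ → 0. Then for every k ∈ ℕ there exists a spreading (u_n″) of (u_n) such that ⦀T_ᾱ^k(u_n) − β^k u_n″⦀ → 0. -/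
open Topology Filter Set

/-- `v` is a spreading of `u` (with respect to the sequence `ξ`) if `v` is obtained
from a representation `u = Σ_{i ∈ F} a i • ξ i` by replacing the indices with a
strictly increasing re-indexing. -/
def IsSpreadingOf {S : Type*} [NormedAddCommGroup S] [NormedSpace ℝ S]
    (ξ : ℕ → S) (u v : S) : Prop :=
  ∃ (F : Finset ℕ) (a : ℕ → ℝ) (k : ℕ → ℕ), StrictMono k ∧
    u = ∑ i ∈ F, a i • ξ i ∧ v = ∑ i ∈ F, a i • ξ (k i)

/-- Reindexing a (possibly non-injectively indexed) sum by a strictly monotone map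
preserves the norm, for a `1`-spreading sequence. -/
lemma spread_general {S : Type*} [NormedAddCommGroup S] [NormedSpace ℝ S] (ξ : ℕ → S)
    (hspread : ∀ (F : Finset ℕ) (a : ℕ → ℝ) (k : ℕ → ℕ), StrictMono k →
      ‖∑ n ∈ F, a n • ξ (k n)‖ = ‖∑ n ∈ F, a n • ξ n‖)
    {ι : Type*} [DecidableEq ι] (t : Finset ι) (c : ι → ℝ) (f : ι → ℕ)
    (ψ : ℕ → ℕ) (hψ : StrictMono ψ) :
    ‖∑ i ∈ t, c i • ξ (ψ (f i))‖ = ‖∑ i ∈ t, c i • ξ (f i)‖ := by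
  classical
  set b : ℕ → ℝ := fun n => ∑ i ∈ t.filter (fun i => f i = n), c i with hb
  have h1 : ∑ i ∈ t, c i • ξ (f i) = ∑ n ∈ t.image f, b n • ξ n := by
    refine (Finset.sum_image' (f := fun n => b n • ξ n) (fun i => c i • ξ (f i)) ?_).symm
    intro i hi
    have : ∑ j ∈ t.filter (fun j => f j = f i), c j • ξ (f j)
        = (∑ j ∈ t.filter (fun j => f j = f i), c j) • ξ (f i) := by
      rw [Finset.sum_smul]
      exact Finset.sum_congr rfl fun x hx => by rw [(Finset.mem_filter.mp hx).2]
    simpa [hb] using this.symm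
  have h2 : ∑ i ∈ t, c i • ξ (ψ (f i)) = ∑ n ∈ t.image f, b n • ξ (ψ n) := by
    refine (Finset.sum_image' (f := fun n => b n • ξ (ψ n)) (fun i => c i • ξ (ψ (f i))) ?_).symm
    intro i hi
    have : ∑ j ∈ t.filter (fun j => f j = f i), c j • ξ (ψ (f j))
        = (∑ j ∈ t.filter (fun j => f j = f i), c j) • ξ (ψ (f i)) := by
      rw [Finset.sum_smul]
      exact Finset.sum_congr rfl fun x hx => by rw [(Finset.mem_filter.mp hx).2]
    simpa [hb] using this.symm
  rw [h1, h2, hspread _ _ _ hψ]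

/-- Extension of a strict mono `l` acting on blocks `[m*i + (m-1), m*i + 2m-2]`. -/
def blockMap (m : ℕ) (l : ℕ → ℕ) : ℕ → ℕ := fun n =>
  if n < m - 1 then n else m * l ((n - (m - 1)) / m) + (m - 1) + (n - (m - 1)) % m

lemma blockMap_spec {m : ℕ} (hm : 2 ≤ m) (l : ℕ → ℕ) (i j : ℕ) (hj : j < m) :
    blockMap m l (m * i + (m - 1) + j) = m * l i + (m - 1) + j := by
  have h1 : ¬ (m * i + (m - 1) + j < m - 1) := by omega
  have h2 : m * i + (m - 1) + j - (m - 1) = m * i + j := by omega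
  have hm0 : 0 < m := by omega
  rw [blockMap, if_neg h1, h2, Nat.mul_add_div hm0, Nat.mul_add_mod,
    Nat.div_eq_of_lt hj, Nat.mod_eq_of_lt hj, Nat.add_zero]

lemma blockMap_strictMono {m : ℕ} (hm : 2 ≤ m) {l : ℕ → ℕ} (hl : StrictMono l) :
    StrictMono (blockMap m l) := by
  have hm0 : 0 < m := by omega
  refine strictMono_nat_of_lt_succ fun n => ?_
  by_cases h : n < m - 1
  · by_cases h' : n + 1 < m - 1
    · rw [blockMap, blockMap, if_pos h, if_pos h']; omega
    · have h1 : n + 1 - (m - 1) = 0 := by omega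
      rw [blockMap, blockMap, if_pos h, if_neg h', h1]
      simp only [Nat.zero_div, Nat.zero_mod, Nat.add_zero]
      omega
  · have hn : ¬ (n + 1 < m - 1) := by omega
    rw [blockMap, blockMap, if_neg h, if_neg hn]
    have e : n + 1 - (m - 1) = (n - (m - 1)) + 1 := by omega
    rw [e]
    set a := n - (m - 1) with ha
    set q := a / m with hq
    set r := a % m with hr
    have hrm : r < m := Nat.mod_lt _ hm0
    have hqr : a = m * q + r := (Nat.div_add_mod a m).symm
    by_cases hcase : r + 1 < m
    · have e1 : a + 1 = m * q + (r + 1) := by omega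
      rw [e1, Nat.mul_add_div hm0, Nat.mul_add_mod, Nat.div_eq_of_lt hcase,
        Nat.mod_eq_of_lt hcase, Nat.add_zero]
      omega
    · have hd : m * (q + 1) = m * q + m := by ring
      have e1 : a + 1 = m * (q + 1) := by omega
      have e2 : (a + 1) / m = q + 1 := by rw [e1, Nat.mul_div_cancel_left _ hm0]
      have e3 : (a + 1) % m = 0 := by rw [e1, Nat.mul_mod_right]
      have hlq : m * (l q + 1) ≤ m * l (q + 1) :=
        Nat.mul_le_mul_left m (by have := hl (by omega : q < q + 1); omega)
      have hexp : m * (l q + 1) = m * l q + m := by ring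
      rw [e2, e3]
      omega

/-- Key norm identity: applying `T` to a spreading of `u` and comparing it with the
corresponding `blockMap`-spreading gives the same norm as the original comparison. -/
lemma key_norm_eq {S : Type*} [NormedAddCommGroup S] [NormedSpace ℝ S] (ξ : ℕ → S)
    (hspread : ∀ (F : Finset ℕ) (a : ℕ → ℝ) (k : ℕ → ℕ), StrictMono k →
      ‖∑ n ∈ F, a n • ξ (k n)‖ = ‖∑ n ∈ F, a n • ξ n‖)
    {m : ℕ} (hm : 2 ≤ m) (α : Fin m → ℚ) (T : S →L[ℝ] S)
    (hT : ∀ k : ℕ, T (ξ k) = ∑ j : Fin m, (α j : ℝ) • ξ (m * k + (m - 1) + (j : ℕ)))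
    (β : ℝ) (F : Finset ℕ) (a : ℕ → ℝ) (k l : ℕ → ℕ) (hl : StrictMono l) :
    ‖T (∑ i ∈ F, a i • ξ (l i)) - β • ∑ i ∈ F, a i • ξ (blockMap m l (k i))‖
      = ‖T (∑ i ∈ F, a i • ξ i) - β • ∑ i ∈ F, a i • ξ (k i)‖ := by
  classical
  set t : Finset (ℕ × Fin m ⊕ ℕ) := (F ×ˢ (Finset.univ : Finset (Fin m))).disjSum F with ht
  set c : ℕ × Fin m ⊕ ℕ → ℝ :=
    Sum.elim (fun p => a p.1 * (α p.2 : ℝ)) (fun i => -(β * a i)) with hc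
  set f : ℕ × Fin m ⊕ ℕ → ℕ :=
    Sum.elim (fun p => m * p.1 + (m - 1) + (p.2 : ℕ)) k with hf
  have hT1 : T (∑ i ∈ F, a i • ξ i)
      = ∑ p ∈ F ×ˢ (Finset.univ : Finset (Fin m)),
          (a p.1 * (α p.2 : ℝ)) • ξ (m * p.1 + (m - 1) + (p.2 : ℕ)) := by
    rw [map_sum, Finset.sum_product]
    refine Finset.sum_congr rfl fun i _ => ?_
    rw [map_smul, hT i, Finset.smul_sum]
    exact Finset.sum_congr rfl fun j _ => by rw [smul_smul]
  have hT2 : T (∑ i ∈ F, a i • ξ (l i))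
      = ∑ p ∈ F ×ˢ (Finset.univ : Finset (Fin m)),
          (a p.1 * (α p.2 : ℝ)) • ξ (blockMap m l (m * p.1 + (m - 1) + (p.2 : ℕ))) := by
    rw [map_sum, Finset.sum_product]
    refine Finset.sum_congr rfl fun i _ => ?_
    rw [map_smul, hT (l i), Finset.smul_sum]
    refine Finset.sum_congr rfl fun j _ => ?_
    rw [blockMap_spec hm l i j j.isLt, smul_smul]
  have esub : ∀ (g : ℕ → ℕ), ∑ i ∈ F, (-(β * a i)) • ξ (g i)
      = -(β • ∑ i ∈ F, a i • ξ (g i)) := by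
    intro g
    rw [Finset.smul_sum, ← Finset.sum_neg_distrib]
    exact Finset.sum_congr rfl fun i _ => by rw [smul_smul, ← neg_smul]
  have e1 : ∑ x ∈ t, c x • ξ (f x)
      = T (∑ i ∈ F, a i • ξ i) - β • ∑ i ∈ F, a i • ξ (k i) := by
    rw [ht, Finset.sum_disjSum]
    simp only [hc, hf, Sum.elim_inl, Sum.elim_inr]
    rw [esub k, ← sub_eq_add_neg, ← hT1]
  have e2 : ∑ x ∈ t, c x • ξ (blockMap m l (f x))
      = T (∑ i ∈ F, a i • ξ (l i)) - β • ∑ i ∈ F, a i • ξ (blockMap m l (k i)) := by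
    rw [ht, Finset.sum_disjSum]
    simp only [hc, hf, Sum.elim_inl, Sum.elim_inr]
    rw [esub (fun i => blockMap m l (k i)), ← sub_eq_add_neg, ← hT2]
  rw [← e1, ← e2]
  exact spread_general ξ hspread t c f (blockMap m l) (blockMap_strictMono hm hl)

/-- If `⦀T_ᾱ uₙ − β uₙ′⦀ → 0` for some spreading `(uₙ′)` of `(uₙ)`, then for every `k`
there is a spreading `(uₙ″)` of `(uₙ)` with `⦀T_ᾱ^k uₙ − β^k uₙ″⦀ → 0`. -/
theorem stmt_14 {S : Type*} [NormedAddCommGroup S] [NormedSpace ℝ S] [CompleteSpace S]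
    (ξ : ℕ → S)
    (huncond : ∀ (F : Finset ℕ) (a ε : ℕ → ℝ), (∀ n, ε n = 1 ∨ ε n = -1) →
      ‖∑ n ∈ F, (ε n * a n) • ξ n‖ = ‖∑ n ∈ F, a n • ξ n‖)
    (hspread : ∀ (F : Finset ℕ) (a : ℕ → ℝ) (k : ℕ → ℕ), StrictMono k →
      ‖∑ n ∈ F, a n • ξ (k n)‖ = ‖∑ n ∈ F, a n • ξ n‖)
    (m : ℕ) (hm : 2 ≤ m) (α : Fin m → ℚ)
    (T : S →L[ℝ] S)
    (hT : ∀ k : ℕ, T (ξ k) = ∑ j : Fin m, (α j : ℝ) • ξ (m * k + (m - 1) + (j : ℕ)))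
    (β : ℝ) (hβ : 0 ≤ β)
    (u u' : ℕ → S) (hspr : ∀ n, IsSpreadingOf ξ (u n) (u' n))
    (hlim : Tendsto (fun n => ‖T (u n) - β • u' n‖) atTop (𝓝 0)) :
    ∀ k : ℕ, ∃ u'' : ℕ → S, (∀ n, IsSpreadingOf ξ (u n) (u'' n)) ∧
      Tendsto (fun n => ‖(T ^ k) (u n) - β ^ k • u'' n‖) atTop (𝓝 0) := by
  classical
  unfold IsSpreadingOf at hspr
  choose F a kk hkk hu hu' using hspr
  have key : ∀ K : ℕ, ∃ ψ : ℕ → ℕ → ℕ, (∀ n, StrictMono (ψ n)) ∧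
      Tendsto (fun n => ‖(T ^ K) (u n) - β ^ K • ∑ i ∈ F n, a n i • ξ (ψ n i)‖)
        atTop (𝓝 0) := by
    intro K
    induction K with
    | zero =>
      refine ⟨fun _ => id, fun _ => strictMono_id, ?_⟩
      have h0 : (fun n => ‖(T ^ 0) (u n) - β ^ 0 • ∑ i ∈ F n, a n i • ξ (id i)‖)
          = fun _ => (0 : ℝ) := by
        funext n
        simp only [pow_zero, one_smul, id_eq, ContinuousLinearMap.one_apply, ← hu n,
          sub_self, norm_zero]
      rw [h0]
      exact tendsto_const_nhds
    | succ K ih =>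
      obtain ⟨ψ, hψ, hlimK⟩ := ih
      refine ⟨fun n => fun i => blockMap m (ψ n) (kk n i),
        fun n => (blockMap_strictMono hm (hψ n)).comp (hkk n), ?_⟩
      set v : ℕ → S := fun n => ∑ i ∈ F n, a n i • ξ (ψ n i) with hv
      set w : ℕ → S := fun n => ∑ i ∈ F n, a n i • ξ (blockMap m (ψ n) (kk n i)) with hw
      have hnorm : ∀ n, ‖T (v n) - β • w n‖ = ‖T (u n) - β • u' n‖ := by
        intro n
        rw [hu n, hu' n, hv, hw]
        exact key_norm_eq ξ hspread hm α T hT β (F n) (a n) (kk n) (ψ n) (hψ n)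
      have hbound : ∀ n, ‖(T ^ (K + 1)) (u n) - β ^ (K + 1) • w n‖ ≤
          ‖T‖ * ‖(T ^ K) (u n) - β ^ K • v n‖ + β ^ K * ‖T (u n) - β • u' n‖ := by
        intro n
        have hpow : (T ^ (K + 1)) (u n) = T ((T ^ K) (u n)) := by
          rw [pow_succ']; rfl
        have hdecomp : (T ^ (K + 1)) (u n) - β ^ (K + 1) • w n
            = T ((T ^ K) (u n) - β ^ K • v n) + β ^ K • (T (v n) - β • w n) := by
          rw [hpow, map_sub, map_smul, smul_sub, smul_smul, ← pow_succ]
          abel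
        calc ‖(T ^ (K + 1)) (u n) - β ^ (K + 1) • w n‖
            = ‖T ((T ^ K) (u n) - β ^ K • v n) + β ^ K • (T (v n) - β • w n)‖ := by
              rw [hdecomp]
          _ ≤ ‖T ((T ^ K) (u n) - β ^ K • v n)‖ + ‖β ^ K • (T (v n) - β • w n)‖ :=
              norm_add_le _ _
          _ ≤ ‖T‖ * ‖(T ^ K) (u n) - β ^ K • v n‖ + β ^ K * ‖T (u n) - β • u' n‖ := by
              refine add_le_add (T.le_opNorm _) (le_of_eq ?_)
              rw [norm_smul, Real.norm_eq_abs, abs_of_nonneg (pow_nonneg hβ K), hnorm n]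
      have hlim2 : Tendsto (fun n => ‖T‖ * ‖(T ^ K) (u n) - β ^ K • v n‖
          + β ^ K * ‖T (u n) - β • u' n‖) atTop (𝓝 0) := by
        have := (hlimK.const_mul ‖T‖).add (hlim.const_mul (β ^ K))
        simpa using this
      exact squeeze_zero (fun n => norm_nonneg _) hbound hlim2
  intro K
  obtain ⟨ψ, hψ, h⟩ := key K
  exact ⟨fun n => ∑ i ∈ F n, a n i • ξ (ψ n i),
    fun n => ⟨F n, a n, ψ n, hψ n, hu n, rfl⟩, h⟩
end

section
/- Let X be a Banach space coarsely embeddable into a superstable Banach space, with translation-invariant stable pseudometric d coarsely equivalent to the norm, type space 𝒯, and γ = inf_{t>0} ω_Id(t). If σ ∈ 𝒯 is an admissible symmetric type (i.e., σ(λ, x) = σ(−λ, x) for all (λ,x) and σ(1,0) > γ), then every defining sequence (x_n) ⊆ Δ for σ has no norm-Cauchy subsequence. -/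
open Topology Filter Set

/-- If `σ` is an admissible symmetric type (`σ(λ,x) = σ(-λ,x)` and `σ(1,0) > γ`, where
`γ = inf_{t>0} ω_Id(t)`) on a Banach space with a translation-invariant stable
pseudometric coarsely equivalent to the norm, then no defining sequence for `σ` has a
norm-Cauchy subsequence. -/
theorem stmt_18 {X : Type*} [NormedAddCommGroup X] [NormedSpace ℝ X] [CompleteSpace X]
    (d : X → X → ℝ)
    (hsymm : ∀ x y : X, d x y = d y x)
    (htri : ∀ x y z : X, d x z ≤ d x y + d y z)
    (hnonneg : ∀ x y : X, 0 ≤ d x y)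
    (hinv : ∀ x y z : X, d (x + z) (y + z) = d x y)
    (hcoarse : ∀ t : ℝ, ∃ C : ℝ, ∀ x y : X, ‖x - y‖ ≤ t → d x y ≤ C)
    (hexpand : ∀ m : ℝ, ∃ R : ℝ, ∀ x y : X, R ≤ ‖x - y‖ → m ≤ d x y)
    (hstable : ∀ (x y : ℕ → X),
      (∃ C : ℝ, ∀ n, d (x n) 0 ≤ C) → (∃ C : ℝ, ∀ n, d (y n) 0 ≤ C) →
      ∀ (𝒰 𝒱 : Ultrafilter ℕ), cofinite ≤ (𝒰 : Filter ℕ) → cofinite ≤ (𝒱 : Filter ℕ) →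
      ∀ (a b : ℕ → ℝ) (A B : ℝ),
        (∀ i, Tendsto (fun j => d (x i) (y j)) 𝒱 (𝓝 (a i))) →
        Tendsto a (𝒰 : Filter ℕ) (𝓝 A) →
        (∀ j, Tendsto (fun i => d (x i) (y j)) 𝒰 (𝓝 (b j))) →
        Tendsto b (𝒱 : Filter ℕ) (𝓝 B) → A = B)
    (Δ : Set X) (hΔcount : Δ.Countable) (hΔdense : Dense Δ)
    (hΔ0 : (0 : X) ∈ Δ) (hΔadd : ∀ x ∈ Δ, ∀ y ∈ Δ, x + y ∈ Δ)
    (hΔsmul : ∀ (q : ℚ), ∀ x ∈ Δ, (q : ℝ) • x ∈ Δ)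
    (bar : X → (ℚ × Δ → ℝ)) (hbar : ∀ (x : X) (p : ℚ × Δ), bar x p = d ((p.1 : ℝ) • x) p.2)
    (𝒯 : Set (ℚ × Δ → ℝ)) (h𝒯 : 𝒯 = closure (bar '' Δ))
    (γ : ℝ)
    (hγ : γ = sInf {r : ℝ | ∃ t : ℝ, 0 < t ∧
      r = sSup {s : ℝ | ∃ x y : X, ‖x - y‖ ≤ t ∧ s = d x y}})
    (σ : ℚ × Δ → ℝ) (hσ𝒯 : σ ∈ 𝒯)
    (hσsym : ∀ (q : ℚ) (x : Δ), σ (q, x) = σ (-q, x))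
    (hσadm : γ < σ (1, ⟨0, hΔ0⟩))
    (x : ℕ → X) (hxΔ : ∀ n, x n ∈ Δ)
    (hxdef : Tendsto (fun n => bar (x n)) atTop (𝓝 σ)) :
    ∀ k : ℕ → ℕ, StrictMono k → ¬ CauchySeq (fun n => x (k n)) := by

  intro k hk hcauchy
  obtain ⟨x₀, hx₀⟩ := cauchySeq_tendsto_of_complete hcauchy
  set ω : ℝ → ℝ := fun t => sSup {s : ℝ | ∃ a b : X, ‖a - b‖ ≤ t ∧ s = d a b} with hωdef
  have hωle : ∀ t : ℝ, ∀ a b : X, ‖a - b‖ ≤ t → d a b ≤ ω t := by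
    intro t a b hab
    obtain ⟨C, hC⟩ := hcoarse t
    refine le_csSup ⟨C, ?_⟩ ⟨a, b, hab, rfl⟩
    rintro s ⟨u, v, huv, rfl⟩
    exact hC u v huv
  have hγset : γ = sInf {r : ℝ | ∃ t : ℝ, 0 < t ∧ r = ω t} := hγ
  have hωnonneg : ∀ t : ℝ, 0 ≤ t → 0 ≤ ω t := by
    intro t ht
    exact (hnonneg 0 0).trans (hωle t 0 0 (by simpa using ht))
  have hγle : ∀ t : ℝ, 0 < t → γ ≤ ω t := by
    intro t ht
    rw [hγset]
    refine csInf_le ⟨0, ?_⟩ ⟨t, ht, rfl⟩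
    rintro r ⟨t', ht', rfl⟩
    exact hωnonneg t' ht'.le
  have hne : Set.Nonempty {r : ℝ | ∃ t : ℝ, 0 < t ∧ r = ω t} := ⟨ω 1, 1, one_pos, rfl⟩
  -- pointwise convergence along the subsequence
  have hpt : ∀ p : ℚ × Δ, Tendsto (fun n => d ((p.1 : ℝ) • x (k n)) (p.2 : X)) atTop (𝓝 (σ p)) := by
    intro p
    have h1 := tendsto_pi_nhds.mp hxdef p
    simp only [hbar] at h1
    exact h1.comp hk.tendsto_atTop
  -- |d a y - d b y| ≤ d a b
  have habs : ∀ a b y : X, |d a y - d b y| ≤ d a b := by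
    intro a b y
    rw [abs_sub_le_iff]
    constructor
    · have := htri a b y; linarith
    · have := htri b a y; rw [hsymm b a] at this; linarith
  -- claim A
  have claimA : ∀ (q : ℚ) (y : Δ), |σ (q, y) - d ((q : ℝ) • x₀) (y : X)| ≤ γ := by
    intro q y
    rw [hγset]
    refine le_csInf hne ?_
    rintro r ⟨t, ht, rfl⟩
    have hsmul : Tendsto (fun n => (q : ℝ) • x (k n)) atTop (𝓝 ((q : ℝ) • x₀)) :=
      hx₀.const_smul _
    have hnorm : Tendsto (fun n => ‖(q : ℝ) • x (k n) - (q : ℝ) • x₀‖) atTop (𝓝 0) := by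
      simpa using (tendsto_sub_nhds_zero_iff.mpr hsmul).norm
    have hev : ∀ᶠ n in atTop, ‖(q : ℝ) • x (k n) - (q : ℝ) • x₀‖ < t :=
      hnorm.eventually_lt_const ht
    have htend : Tendsto (fun n => |d ((q : ℝ) • x (k n)) (y : X) - d ((q : ℝ) • x₀) (y : X)|)
        atTop (𝓝 (|σ (q, y) - d ((q : ℝ) • x₀) (y : X)|)) :=
      ((hpt (q, y)).sub tendsto_const_nhds).abs
    refine le_of_tendsto htend ?_
    filter_upwards [hev] with n hn
    exact (habs _ _ _).trans (hωle t _ _ hn.le)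
  -- symmetry consequence
  have hsym2 : ∀ (q : ℚ) (y : Δ),
      |d ((q : ℝ) • x₀) (y : X) - d (-(q : ℝ) • x₀) (y : X)| ≤ 2 * γ := by
    intro q y
    have h1 := claimA q y
    have h2 := claimA (-q) y
    have hc : ((-q : ℚ) : ℝ) = -(q : ℝ) := by push_cast; ring
    rw [hc] at h2
    rw [hσsym q y] at h1
    rw [abs_sub_le_iff] at h1 h2 ⊢
    constructor <;> linarith [h1.1, h1.2, h2.1, h2.2]
  -- x₀ = 0
  have hx0 : x₀ = 0 := by
    by_contra hne0
    have hxpos : 0 < ‖x₀‖ := norm_pos_iff.mpr hne0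
    obtain ⟨R, hR⟩ := hexpand (4 * γ + 1)
    obtain ⟨q, hq⟩ := exists_rat_gt (max 0 (R / (2 * ‖x₀‖)))
    have hq0 : (0 : ℝ) < q := lt_of_le_of_lt (le_max_left _ _) hq
    have hRlt : R < (q : ℝ) * (2 * ‖x₀‖) :=
      (div_lt_iff₀ (by positivity)).mp ((le_max_right _ _).trans_lt hq)
    have hRnorm : R ≤ ‖(q : ℝ) • x₀ - (-(q : ℝ)) • x₀‖ := by
      have heq : (q : ℝ) • x₀ - (-(q : ℝ)) • x₀ = (2 * (q : ℝ)) • x₀ := by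
        module
      rw [heq, norm_smul, Real.norm_eq_abs, abs_of_pos (by linarith)]
      nlinarith
    have key : ∀ t : ℝ, 0 < t → d ((q : ℝ) • x₀) ((-(q : ℝ)) • x₀) ≤ 2 * γ + 2 * ω t := by
      intro t ht
      obtain ⟨y, hyΔ, hy⟩ := hΔdense.exists_dist_lt ((-(q : ℝ)) • x₀) ht
      have hy' : ‖(-(q : ℝ)) • x₀ - y‖ ≤ t := by
        rw [← dist_eq_norm]; exact hy.le
      have h1 : d ((-(q : ℝ)) • x₀) y ≤ ω t := hωle t _ _ hy'
      have h2 := hsym2 q ⟨y, hyΔ⟩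
      simp only [neg_smul] at h2 ⊢
      rw [abs_sub_le_iff] at h2
      have h3 := htri ((q : ℝ) • x₀) y (-((q : ℝ) • x₀))
      have h4 : d y (-((q : ℝ) • x₀)) = d (-((q : ℝ) • x₀)) y := hsymm _ _
      simp only [neg_smul] at h1
      linarith [h2.1, h2.2]
    have hD : d ((q : ℝ) • x₀) ((-(q : ℝ)) • x₀) ≤ 4 * γ := by
      have hlb : (d ((q : ℝ) • x₀) ((-(q : ℝ)) • x₀) - 2 * γ) / 2 ≤ γ := by
        rw [hγset]
        refine le_csInf hne ?_
        rintro r ⟨t, ht, rfl⟩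
        linarith [key t ht]
      linarith
    have := hR _ _ hRnorm
    linarith
  -- conclude
  rw [hx0] at hx₀
  have hfin : σ (1, ⟨0, hΔ0⟩) ≤ γ := by
    rw [hγset]
    refine le_csInf hne ?_
    rintro r ⟨t, ht, rfl⟩
    have hptσ := hpt (1, ⟨0, hΔ0⟩)
    refine le_of_tendsto hptσ ?_
    have hnorm : Tendsto (fun n => ‖x (k n)‖) atTop (𝓝 0) := by
      simpa using hx₀.norm
    filter_upwards [hnorm.eventually_lt_const ht] with n hn
    have : ‖(((1 : ℚ) : ℝ)) • x (k n) - ((⟨0, hΔ0⟩ : Δ) : X)‖ ≤ t := by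
      simpa using hn.le
    exact hωle t _ _ this
  linarith
end

section
/- Every nonempty chain (under reverse inclusion) of closed admissible conic classes in the type space 𝒯 has an upper bound, and consequently every closed admissible conic class contains a minimal closed admissible conic class. Key step: if {𝒞_i}_{i∈I} is a chain of closed admissible conic classes, then ⋂_{i∈I} 𝒞_i is a closed admissible conic class. -/
open Topology Filter Set in
lemma approx_closure {ι A : Type*} (f : A → ι → ℝ) (s : Set A)
    (σ : ι → ℝ) (hσ : σ ∈ closure (f '' s)) (ps : Finset ι) {ε : ℝ} (hε : 0 < ε) :
    ∃ x ∈ s, ∀ p ∈ ps, |f x p - σ p| < ε := by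
  have hopen : IsOpen {τ : ι → ℝ | ∀ p ∈ ps, |τ p - σ p| < ε} := by
    have he : {τ : ι → ℝ | ∀ p ∈ ps, |τ p - σ p| < ε}
        = ⋂ p ∈ ps, (fun τ : ι → ℝ => τ p) ⁻¹' Metric.ball (σ p) ε := by
      ext τ; simp [Real.dist_eq, Metric.mem_ball]
    rw [he]
    exact isOpen_biInter_finset fun p _ => Metric.isOpen_ball.preimage (continuous_apply p)
  have hmem : σ ∈ {τ : ι → ℝ | ∀ p ∈ ps, |τ p - σ p| < ε} := by
    intro p _; simpa using hε
  obtain ⟨τ, hτ1, x, hx, rfl⟩ := mem_closure_iff.mp hσ _ hopen hmem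
  exact ⟨x, hx, hτ1⟩


open Topology Filter Set

/-- `𝒞` is a closed admissible conic class: a closed nonempty subset of the symmetric
types `𝒮`, distinct from the singleton of the trivial type, closed under dilations and
convolutions, and containing an admissible type. -/
def IsClosedAdmissibleConicClass {A : Type*} [TopologicalSpace A]
    (𝒮 : Set A) (zero : A) (dil : ℚ → A → A) (star : A → A → A) (adm : A → Prop)
    (𝒞 : Set A) : Prop :=
  IsClosed 𝒞 ∧ 𝒞.Nonempty ∧ 𝒞 ⊆ 𝒮 ∧ 𝒞 ≠ {zero} ∧
    (∀ lam : ℚ, ∀ σ ∈ 𝒞, dil lam σ ∈ 𝒞) ∧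
    (∀ σ ∈ 𝒞, ∀ τ ∈ 𝒞, star σ τ ∈ 𝒞) ∧
    ∃ σ ∈ 𝒞, adm σ

/-- In the type space of a Banach space with a translation-invariant stable
pseudometric coarsely equivalent to the norm: the intersection of a chain of closed
admissible conic classes is a closed admissible conic class, and consequently every
closed admissible conic class contains a minimal one. -/
theorem stmt_19 {X : Type*} [NormedAddCommGroup X] [NormedSpace ℝ X] [CompleteSpace X]
    (d : X → X → ℝ)
    (hsymm : ∀ x y : X, d x y = d y x)
    (htri : ∀ x y z : X, d x z ≤ d x y + d y z)
    (hnonneg : ∀ x y : X, 0 ≤ d x y)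
    (hinv : ∀ x y z : X, d (x + z) (y + z) = d x y)
    (hcoarse : ∀ t : ℝ, ∃ C : ℝ, ∀ x y : X, ‖x - y‖ ≤ t → d x y ≤ C)
    (hexpand : ∀ m : ℝ, ∃ R : ℝ, ∀ x y : X, R ≤ ‖x - y‖ → m ≤ d x y)
    (hstable : ∀ (x y : ℕ → X),
      (∃ C : ℝ, ∀ n, d (x n) 0 ≤ C) → (∃ C : ℝ, ∀ n, d (y n) 0 ≤ C) →
      ∀ (𝒰 𝒱 : Ultrafilter ℕ), cofinite ≤ (𝒰 : Filter ℕ) → cofinite ≤ (𝒱 : Filter ℕ) →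
      ∀ (a b : ℕ → ℝ) (A B : ℝ),
        (∀ i, Tendsto (fun j => d (x i) (y j)) 𝒱 (𝓝 (a i))) →
        Tendsto a (𝒰 : Filter ℕ) (𝓝 A) →
        (∀ j, Tendsto (fun i => d (x i) (y j)) 𝒰 (𝓝 (b j))) →
        Tendsto b (𝒱 : Filter ℕ) (𝓝 B) → A = B)
    (Δ : Set X) (hΔcount : Δ.Countable) (hΔdense : Dense Δ)
    (hΔ0 : (0 : X) ∈ Δ) (hΔadd : ∀ x ∈ Δ, ∀ y ∈ Δ, x + y ∈ Δ)
    (hΔsmul : ∀ (q : ℚ), ∀ x ∈ Δ, (q : ℝ) • x ∈ Δ)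
    (bar : X → (ℚ × Δ → ℝ)) (hbar : ∀ (x : X) (p : ℚ × Δ), bar x p = d ((p.1 : ℝ) • x) p.2)
    (𝒯 : Set (ℚ × Δ → ℝ)) (h𝒯 : 𝒯 = closure (bar '' Δ))
    (γ : ℝ)
    (hγ : γ = sInf {r : ℝ | ∃ t : ℝ, 0 < t ∧
      r = sSup {s : ℝ | ∃ x y : X, ‖x - y‖ ≤ t ∧ s = d x y}})
    (𝒮 : Set (ℚ × Δ → ℝ))
    (h𝒮 : 𝒮 = {σ ∈ 𝒯 | ∀ (q : ℚ) (x : Δ), σ (q, x) = σ (-q, x)})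
    (dil : ℚ → (ℚ × Δ → ℝ) → (ℚ × Δ → ℝ))
    (hdil : ∀ (lam : ℚ) (σ : ℚ × Δ → ℝ) (p : ℚ × Δ), dil lam σ p = σ (p.1 * lam, p.2))
    (star : (ℚ × Δ → ℝ) → (ℚ × Δ → ℝ) → (ℚ × Δ → ℝ))
    (hstarmem : ∀ σ ∈ 𝒯, ∀ τ ∈ 𝒯, star σ τ ∈ 𝒯)
    (hstar : ∀ σ ∈ 𝒯, ∀ τ ∈ 𝒯, ∀ (x y : ℕ → X), (∀ n, x n ∈ Δ) → (∀ n, y n ∈ Δ) →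
      Tendsto (fun n => bar (x n)) atTop (𝓝 σ) →
      Tendsto (fun n => bar (y n)) atTop (𝓝 τ) →
      ∃ c : ℕ → (ℚ × Δ → ℝ),
        (∀ n, Tendsto (fun m => bar (x n + y m)) atTop (𝓝 (c n))) ∧
        Tendsto c atTop (𝓝 (star σ τ))) :
    (∀ (I : Type) (_ : Nonempty I) (C : I → Set (ℚ × Δ → ℝ)),
      (∀ i j : I, C i ⊆ C j ∨ C j ⊆ C i) →
      (∀ i : I, IsClosedAdmissibleConicClass 𝒮 (bar 0) dil star
        (fun σ => γ < σ (1, ⟨0, hΔ0⟩)) (C i)) →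
      IsClosedAdmissibleConicClass 𝒮 (bar 0) dil star
        (fun σ => γ < σ (1, ⟨0, hΔ0⟩)) (⋂ i, C i)) ∧
    ∀ 𝒞 : Set (ℚ × Δ → ℝ),
      IsClosedAdmissibleConicClass 𝒮 (bar 0) dil star
        (fun σ => γ < σ (1, ⟨0, hΔ0⟩)) 𝒞 →
      ∃ 𝒞' ⊆ 𝒞, IsClosedAdmissibleConicClass 𝒮 (bar 0) dil star
          (fun σ => γ < σ (1, ⟨0, hΔ0⟩)) 𝒞' ∧
        ∀ 𝒟 ⊆ 𝒞', IsClosedAdmissibleConicClass 𝒮 (bar 0) dil star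
          (fun σ => γ < σ (1, ⟨0, hΔ0⟩)) 𝒟 → 𝒟 = 𝒞' := by
  classical
  obtain ⟨C1, hC1⟩ := hcoarse 1
  set z0 : Δ := ⟨0, hΔ0⟩ with hz0
  set p0 : ℚ × Δ := (1, z0) with hp0
  set w : ℝ → ℝ := fun t => sSup {s : ℝ | ∃ x y : X, ‖x - y‖ ≤ t ∧ s = d x y} with hw
  set a : ℝ := γ + 1 with ha
  set b : ℝ := γ + 2 + C1 with hb
  -- basic facts about w and γ
  have hwle : ∀ t : ℝ, ∀ x y : X, ‖x - y‖ ≤ t → d x y ≤ w t := by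
    intro t x y hxy
    obtain ⟨C, hC⟩ := hcoarse t
    exact le_csSup ⟨C, by rintro s ⟨u, v, huv, rfl⟩; exact hC u v huv⟩ ⟨x, y, hxy, rfl⟩
  have hγw : ∀ t : ℝ, 0 < t → γ ≤ w t := by
    intro t ht
    rw [hγ]
    refine csInf_le ⟨d 0 0, ?_⟩ ⟨t, ht, rfl⟩
    rintro r ⟨t', ht', rfl⟩
    exact hwle t' 0 0 (by simp [ht'.le])
  have hd00γ : d 0 0 ≤ γ := by
    rw [hγ]
    refine le_csInf ⟨w 1, 1, one_pos, rfl⟩ ?_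
    rintro r ⟨t, ht, rfl⟩
    exact hwle t 0 0 (by simp [ht.le])
  have hexistsw : ∀ c : ℝ, γ < c → ∃ t : ℝ, 0 < t ∧ w t < c := by
    intro c hc
    by_contra hcon
    push_neg at hcon
    have : c ≤ γ := by
      rw [hγ]
      refine le_csInf ⟨w 1, 1, one_pos, rfl⟩ ?_
      rintro r ⟨t, ht, rfl⟩
      exact hcon t ht
    linarith
  have hC1' : 0 ≤ C1 := le_trans (hnonneg 0 0) (hC1 0 0 (by simp))
  -- bar basics
  have hbar0 : ∀ x : X, bar x p0 = d x 0 := by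
    intro x
    rw [hbar]
    norm_num [hp0, hz0]
  have hbar00 : bar 0 p0 = d 0 0 := by rw [hbar0]
  have hbarz : ∀ (x : X) (q : ℚ), bar x (q, z0) = d ((q : ℝ) • x) 0 := by
    intro x q
    rw [hbar]
  -- 𝒯 facts
  have h𝒯closed : IsClosed 𝒯 := h𝒯 ▸ isClosed_closure
  have h𝒮sub : 𝒮 ⊆ 𝒯 := by rw [h𝒮]; exact sep_subset _ _
  have happrox : ∀ σ ∈ 𝒯, ∀ ps : Finset (ℚ × Δ), ∀ ε : ℝ, 0 < ε →
      ∃ x ∈ Δ, ∀ p ∈ ps, |bar x p - σ p| < ε := by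
    intro σ hσ ps ε hε
    rw [h𝒯] at hσ
    exact approx_closure bar Δ σ hσ ps hε
  -- expansion constants
  obtain ⟨r1, hr1⟩ := hexpand a
  obtain ⟨Rb, hRb⟩ := hexpand (b + 2)
  set Rb' : ℝ := max Rb 1 with hRb'
  -- per-coordinate bounds
  have Bspec : ∀ p : ℚ × Δ, ∃ Bp : ℝ, ∀ z : X, ‖z‖ ≤ |(p.1 : ℝ)| * Rb' → d z (p.2 : X) ≤ Bp := by
    intro p
    obtain ⟨Cp, hCp⟩ := hcoarse (|(p.1 : ℝ)| * Rb')
    refine ⟨Cp + d 0 (p.2 : X), fun z hz => ?_⟩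
    have h1 : d z 0 ≤ Cp := hCp z 0 (by simpa using hz)
    have := htri z 0 (p.2 : X)
    linarith
  choose B hB using Bspec
  -- coordinate bound lemma
  have hcoord : ∀ σ ∈ 𝒯, σ p0 ≤ b → ∀ p : ℚ × Δ, σ p ∈ Icc 0 (B p) := by
    intro σ hσ hσb p
    constructor
    · by_contra hneg
      push_neg at hneg
      obtain ⟨x, _, hcl⟩ := happrox σ hσ {p} (-(σ p)) (by linarith)
      have h2 := hcl p (by simp)
      have hnn : 0 ≤ bar x p := by rw [hbar]; exact hnonneg _ _
      rw [abs_lt] at h2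
      linarith [h2.2]
    · refine le_of_forall_pos_le_add fun ε hε => ?_
      set ε' : ℝ := min ε 1 with hε'
      have hε'pos : 0 < ε' := lt_min hε one_pos
      have hε'le : ε' ≤ 1 := min_le_right _ _
      obtain ⟨x, _, hcl⟩ := happrox σ hσ {p0, p} ε' hε'pos
      have h1 := hcl p0 (by simp)
      have h2 := hcl p (by simp)
      rw [hbar0, abs_lt] at h1
      rw [hbar, abs_lt] at h2
      have hxnorm : ‖x‖ ≤ Rb' := by
        by_contra hc
        push_neg at hc
        have hx0 : Rb ≤ ‖x - 0‖ := by
          rw [sub_zero]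
          exact le_trans (le_max_left Rb 1) hc.le
        have := hRb x 0 hx0
        linarith [h1.2]
      have hz : ‖(p.1 : ℝ) • x‖ ≤ |(p.1 : ℝ)| * Rb' := by
        rw [norm_smul]
        exact mul_le_mul_of_nonneg_left hxnorm (abs_nonneg _)
      have hBp := hB p _ hz
      have : σ p < B p + ε' := by linarith [h2.1]
      linarith [min_le_left ε 1]
  -- rescaling lemma
  have hrescale : ∀ σ ∈ 𝒯, γ < σ p0 → ∃ β : ℚ, 0 < β ∧ a ≤ σ (β, z0) ∧ σ (β, z0) ≤ b := by
    intro σ hσ hadm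
    set s0 : ℝ := σ p0 with hs0
    obtain ⟨t1, ht1pos, ht1⟩ : ∃ t : ℝ, 0 < t ∧ w t < min a s0 := by
      refine hexistsw _ (lt_min (by rw [ha]; linarith) hadm)
    obtain ⟨R0, hR0⟩ := hexpand (s0 + 1)
    set R' : ℝ := max R0 1 with hR'def
    have hR'pos : (0 : ℝ) < R' := lt_of_lt_of_le one_pos (le_max_right _ _)
    set ε0 : ℝ := min 1 (s0 - w t1) with hε0
    have hε0pos : 0 < ε0 := lt_min one_pos (by linarith [lt_of_lt_of_le ht1 (min_le_right a s0)])
    have key : ∀ x : X, |d x 0 - s0| < ε0 → ‖x‖ ≤ R' ∧ t1 ≤ ‖x‖ := by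
      intro x hx
      rw [abs_lt] at hx
      constructor
      · by_contra hc
        push_neg at hc
        have : R0 ≤ ‖x - 0‖ := by
          rw [sub_zero]; exact le_trans (le_max_left R0 1) hc.le
        have := hR0 x 0 this
        have : ε0 ≤ 1 := min_le_left _ _
        linarith [hx.2]
      · by_contra hc
        push_neg at hc
        have : d x 0 ≤ w t1 := hwle t1 x 0 (by rw [sub_zero]; exact hc.le)
        have : ε0 ≤ s0 - w t1 := min_le_right _ _
        linarith [hx.1]
    -- upper claim
    have hU : ∀ α : ℚ, 0 < α → (α : ℝ) * R' ≤ t1 → σ (α, z0) ≤ w t1 := by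
      intro α hα hαR
      refine le_of_forall_pos_le_add fun ε hε => ?_
      obtain ⟨x, _, hcl⟩ := happrox σ hσ {p0, (α, z0)} (min ε ε0) (lt_min hε hε0pos)
      have h1 := hcl p0 (by simp)
      have h2 := hcl (α, z0) (by simp)
      rw [hbar0] at h1
      rw [hbarz, abs_lt] at h2
      have hx := key x (lt_of_lt_of_le h1 (min_le_right _ _))
      have hsm : ‖(α : ℝ) • x - 0‖ ≤ t1 := by
        rw [sub_zero, norm_smul, Real.norm_eq_abs, abs_of_pos (by exact_mod_cast hα : (0:ℝ) < (α:ℝ))]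
        calc (α : ℝ) * ‖x‖ ≤ (α : ℝ) * R' :=
              mul_le_mul_of_nonneg_left hx.1 (by positivity)
          _ ≤ t1 := hαR
      have := hwle t1 _ _ hsm
      have := h2.1
      have hmin : min ε ε0 ≤ ε := min_le_left _ _
      linarith
    -- lower claim
    have hL : ∀ α : ℚ, 0 < α → r1 ≤ (α : ℝ) * t1 → a ≤ σ (α, z0) := by
      intro α hα hαt
      refine le_of_forall_pos_le_add fun ε hε => ?_
      obtain ⟨x, _, hcl⟩ := happrox σ hσ {p0, (α, z0)} (min ε ε0) (lt_min hε hε0pos)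
      have h1 := hcl p0 (by simp)
      have h2 := hcl (α, z0) (by simp)
      rw [hbar0] at h1
      rw [hbarz, abs_lt] at h2
      have hx := key x (lt_of_lt_of_le h1 (min_le_right _ _))
      have hsm : r1 ≤ ‖(α : ℝ) • x - 0‖ := by
        rw [sub_zero, norm_smul, Real.norm_eq_abs, abs_of_pos (by exact_mod_cast hα : (0:ℝ) < (α:ℝ))]
        calc r1 ≤ (α : ℝ) * t1 := hαt
          _ ≤ (α : ℝ) * ‖x‖ := mul_le_mul_of_nonneg_left hx.2 (by positivity)
      have := hr1 _ _ hsm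
      have := h2.2
      have hmin : min ε ε0 ≤ ε := min_le_left _ _
      linarith
    -- jump claim
    have hJ : ∀ α β : ℚ, 0 < α → α ≤ β → ((β : ℝ) - (α : ℝ)) * R' ≤ 1 →
        σ (β, z0) ≤ σ (α, z0) + C1 := by
      intro α β hα hαβ hβα
      refine le_of_forall_pos_le_add fun ε hε => ?_
      have hε2 : 0 < ε / 2 := by linarith
      obtain ⟨x, _, hcl⟩ := happrox σ hσ {p0, (α, z0), (β, z0)} (min (ε/2) ε0)
        (lt_min hε2 hε0pos)
      have h1 := hcl p0 (by simp)
      have h2 := hcl (α, z0) (by simp)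
      have h3 := hcl (β, z0) (by simp)
      rw [hbar0] at h1
      rw [hbarz, abs_lt] at h2
      rw [hbarz, abs_lt] at h3
      have hx := key x (lt_of_lt_of_le h1 (min_le_right _ _))
      -- d (β x) (α x) = d ((β - α) x) 0
      have hinv' : d ((β : ℝ) • x) ((α : ℝ) • x) = d (((β : ℝ) - (α : ℝ)) • x) 0 := by
        have h := hinv ((β : ℝ) • x - (α : ℝ) • x) 0 ((α : ℝ) • x)
        rw [sub_smul]
        simpa using h
      have hsmall : d (((β : ℝ) - (α : ℝ)) • x) 0 ≤ C1 := by
        refine hC1 _ _ ?_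
        rw [sub_zero, norm_smul, Real.norm_eq_abs, abs_of_nonneg (by exact_mod_cast sub_nonneg.mpr hαβ : (0:ℝ) ≤ (β:ℝ) - (α:ℝ))]
        calc ((β : ℝ) - (α : ℝ)) * ‖x‖ ≤ ((β : ℝ) - (α : ℝ)) * R' :=
              mul_le_mul_of_nonneg_left hx.1 (by exact_mod_cast sub_nonneg.mpr hαβ)
          _ ≤ 1 := hβα
      have htri' := htri ((β : ℝ) • x) ((α : ℝ) • x) 0
      rw [hsymm ((α : ℝ) • x) 0] at htri'
      -- d (βx) 0 ≤ d (βx) (αx) + d 0 (αx)?? careful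
      have hd : d ((β : ℝ) • x) 0 ≤ C1 + d ((α : ℝ) • x) 0 := by
        have htri'' := htri ((β : ℝ) • x) ((α : ℝ) • x) 0
        rw [hinv'] at htri''
        linarith [hsmall]
      have hmin : min (ε/2) ε0 ≤ ε / 2 := min_le_left _ _
      linarith [h2.2, h3.1]
    -- the crossing argument
    set A : Set ℝ := {r : ℝ | ∃ α : ℚ, 0 < α ∧ (α : ℝ) = r ∧ σ (α, z0) < a} with hA
    have hwta : w t1 < a := lt_of_lt_of_le ht1 (min_le_left _ _)
    obtain ⟨q, hq0, hqlt⟩ := exists_rat_btwn (div_pos ht1pos hR'pos)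
    have hq0' : 0 < q := by exact_mod_cast hq0
    have hqA : (q : ℝ) ∈ A := by
      refine ⟨q, hq0', rfl, ?_⟩
      have : (q : ℝ) * R' ≤ t1 := by
        rw [← le_div_iff₀ hR'pos]; exact hqlt.le
      exact lt_of_le_of_lt (hU q hq0' this) hwta
    have hAne : A.Nonempty := ⟨q, hqA⟩
    have hAbdd : BddAbove A := by
      refine ⟨r1 / t1, ?_⟩
      rintro r ⟨α, hαpos, rfl, hlt⟩
      by_contra hc
      push_neg at hc
      have : r1 ≤ (α : ℝ) * t1 := by
        rw [div_lt_iff₀ ht1pos] at hc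
        linarith
      exact absurd (hL α hαpos this) (not_le.mpr hlt)
    set s := sSup A with hs
    have hspos : 0 < s := lt_of_lt_of_le (by exact_mod_cast hq0) (le_csSup hAbdd hqA)
    set δ : ℝ := min (1 / (2 * R')) (s / 2) with hδ
    have hδpos : 0 < δ := lt_min (by positivity) (by linarith)
    obtain ⟨r, hrA, hrgt⟩ := exists_lt_of_lt_csSup hAne (show s - δ < s by linarith)
    obtain ⟨α, hαpos, rfl, hαlt⟩ := hrA
    obtain ⟨β, hβ1, hβ2⟩ := exists_rat_btwn (show s < s + δ by linarith)
    have hβpos : 0 < β := by exact_mod_cast lt_trans hspos hβ1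
    have hαle : (α : ℝ) ≤ s := le_csSup hAbdd ⟨α, hαpos, rfl, hαlt⟩
    have hαβ : α ≤ β := by exact_mod_cast le_trans hαle hβ1.le
    have hgap : ((β : ℝ) - (α : ℝ)) * R' ≤ 1 := by
      have h2δ : (β : ℝ) - (α : ℝ) ≤ 2 * δ := by linarith
      have : (β : ℝ) - (α : ℝ) ≤ 1 / R' := by
        have : 2 * δ ≤ 1 / R' := by
          have := min_le_left (1 / (2 * R')) (s / 2)
          rw [← hδ] at this
          calc 2 * δ ≤ 2 * (1 / (2 * R')) := by linarith
            _ = 1 / R' := by field_simp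
        linarith
      calc ((β : ℝ) - (α : ℝ)) * R' ≤ (1 / R') * R' :=
            mul_le_mul_of_nonneg_right this hR'pos.le
        _ = 1 := by field_simp
    have hJβ := hJ α β hαpos hαβ hgap
    have hβnotA : ¬ σ (β, z0) < a := by
      intro h
      have : (β : ℝ) ≤ s := le_csSup hAbdd ⟨β, hβpos, rfl, h⟩
      linarith
    refine ⟨β, hβpos, not_lt.mp hβnotA, ?_⟩
    have hble : a + C1 ≤ b := by rw [ha, hb]; linarith
    have : σ (α, z0) < a := hαlt
    linarith
  -- closedness of the window set
  set V : Set (ℚ × Δ → ℝ) := {τ | a ≤ τ p0 ∧ τ p0 ≤ b} with hV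
  have hVclosed : IsClosed V := by
    have he : V = (fun τ : ℚ × Δ → ℝ => τ p0) ⁻¹' Icc a b := by
      ext τ; simp [hV, Icc]
    rw [he]
    exact isClosed_Icc.preimage (continuous_apply p0)
  -- the ambient compact set
  set K : Set (ℚ × Δ → ℝ) := 𝒯 ∩ univ.pi fun p => Icc 0 (B p) with hK
  have hKcompact : IsCompact K :=
    (isCompact_univ_pi fun p => isCompact_Icc).inter_left h𝒯closed
  -- the chain intersection argument, for set-indexed families
  have part1' : ∀ c : Set (Set (ℚ × Δ → ℝ)), c.Nonempty → IsChain (· ⊆ ·) c →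
      (∀ D ∈ c, IsClosedAdmissibleConicClass 𝒮 (bar 0) dil star
        (fun σ => γ < σ (1, ⟨0, hΔ0⟩)) D) →
      IsClosedAdmissibleConicClass 𝒮 (bar 0) dil star
        (fun σ => γ < σ (1, ⟨0, hΔ0⟩)) (⋂₀ c) := by
    intro c hcne hchain hcl
    haveI : Nonempty c := hcne.to_subtype
    set F : c → Set (ℚ × Δ → ℝ) := fun D => (D : Set (ℚ × Δ → ℝ)) ∩ V with hF
    have hFne : ∀ D : c, (F D).Nonempty := by
      rintro ⟨D, hD⟩
      obtain ⟨hclosed, hne, hsub, hnz, hdilc, hstarc, σ, hσC, hσadm⟩ := hcl D hD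
      have hσ𝒯 : σ ∈ 𝒯 := h𝒮sub (hsub hσC)
      obtain ⟨β, hβpos, hge, hle⟩ := hrescale σ hσ𝒯 hσadm
      refine ⟨dil β σ, hdilc β σ hσC, ?_, ?_⟩ <;>
        · rw [hdil]
          simpa [hp0, one_mul] using (by first | exact hge | exact hle)
    have hFclosed : ∀ D : c, IsClosed (F D) := fun ⟨D, hD⟩ => (hcl D hD).1.inter hVclosed
    have hFsub : ∀ D : c, F D ⊆ K := by
      rintro ⟨D, hD⟩ τ ⟨hτD, hτV⟩
      have hτ𝒯 : τ ∈ 𝒯 := h𝒮sub ((hcl D hD).2.2.1 hτD)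
      exact ⟨hτ𝒯, fun p _ => hcoord τ hτ𝒯 hτV.2 p⟩
    have hFcompact : ∀ D : c, IsCompact (F D) := fun D =>
      hKcompact.of_isClosed_subset (hFclosed D) (hFsub D)
    have hdir : Directed (· ⊇ ·) F := by
      rintro ⟨D, hD⟩ ⟨E, hE⟩
      rcases eq_or_ne D E with rfl | hne
      · exact ⟨⟨D, hD⟩, le_refl _, le_refl _⟩
      rcases hchain hD hE hne with h | h
      · exact ⟨⟨D, hD⟩, le_refl _, inter_subset_inter_left V h⟩
      · exact ⟨⟨E, hE⟩, inter_subset_inter_left V h, le_refl _⟩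
    obtain ⟨τ, hτ⟩ := IsCompact.nonempty_iInter_of_directed_nonempty_isCompact_isClosed
      F hdir hFne hFcompact hFclosed
    have hτc : ∀ D ∈ c, τ ∈ D := fun D hD => (mem_iInter.mp hτ ⟨D, hD⟩).1
    have hτmem : τ ∈ ⋂₀ c := by rw [mem_sInter]; exact hτc
    obtain ⟨D0, hD0⟩ := hcne
    have hτa : a ≤ τ p0 := (mem_iInter.mp hτ ⟨D0, hD0⟩).2.1
    have hτadm : γ < τ p0 := by rw [ha] at hτa; linarith
    refine ⟨?_, ⟨τ, hτmem⟩, ?_, ?_, ?_, ?_, τ, hτmem, hτadm⟩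
    · exact isClosed_sInter fun D hD => (hcl D hD).1
    · exact (sInter_subset_of_mem hD0).trans (hcl D0 hD0).2.2.1
    · intro hcontra
      have hτ0 : τ = bar 0 := by
        have : τ ∈ ({bar 0} : Set (ℚ × Δ → ℝ)) := hcontra ▸ hτmem
        simpa using this
      rw [hτ0, hbar00] at hτadm
      linarith
    · intro lam σ hσ
      rw [mem_sInter] at hσ ⊢
      exact fun D hD => (hcl D hD).2.2.2.2.1 lam σ (hσ D hD)
    · intro σ hσ τ' hτ'
      rw [mem_sInter] at hσ hτ' ⊢
      exact fun D hD => (hcl D hD).2.2.2.2.2.1 σ (hσ D hD) τ' (hτ' D hD)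
  constructor
  · -- part 1 for type-indexed chains
    intro I hI C hchain hcl
    have hrange : (range C).Nonempty := range_nonempty C
    have hchain' : IsChain (· ⊆ ·) (range C) := by
      rintro _ ⟨i, rfl⟩ _ ⟨j, rfl⟩ _
      exact hchain i j
    have := part1' (range C) hrange hchain' (by rintro _ ⟨i, rfl⟩; exact hcl i)
    rwa [sInter_range] at this
  · -- Zorn
    intro 𝒞 h𝒞
    set S : Set (Set (ℚ × Δ → ℝ)) := {D | IsClosedAdmissibleConicClass 𝒮 (bar 0) dil star
      (fun σ => γ < σ (1, ⟨0, hΔ0⟩)) D} with hS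
    obtain ⟨m, hm𝒞, hmS, hmin⟩ :
        ∃ m, m ⊆ 𝒞 ∧ Minimal (· ∈ S) m := by
      refine zorn_superset_nonempty S ?_ 𝒞 h𝒞
      intro c hcS hchain hcne
      exact ⟨⋂₀ c, part1' c hcne hchain fun D hD => hcS hD,
        fun s hs => sInter_subset_of_mem hs⟩
    exact ⟨m, hm𝒞, hmS, fun D hD hDS => le_antisymm hD (hmin hDS hD)⟩
end
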